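/- arXiv:1102.4802 — 5 statements merged into one kernel-verified Lean document; each statement's English description precedes it below -/
import Mathlib

section
/- Let (G, C, color) be an edge-colored graph of order at least m, and let f be a function from the color set C to the non-negative integers. If G has an f-chromatic spanning forest with exactly m components, then for every subset R of C, the number of components of G - E_R(G) is at most m + sum over c in R of f(c). -/
open SimpleGraph Finset

/-- Number of connected components of a graph. -/
noncomputable def omega {V : Type*} (G : SimpleGraph V) : ℕ :=
  Nat.card G.ConnectedComponent

private lemma omega_le_of_le {V : Type*} [Finite V] {H G : SimpleGraph V} (h : H ≤ G) :
    omega G ≤ omega H := by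
  apply Nat.card_le_card_of_surjective (ConnectedComponent.map (Hom.ofLE h))
  intro c
  obtain ⟨v, rfl⟩ := c.exists_rep
  exact ⟨H.connectedComponentMk v, rfl⟩

private lemma walk_aux {V : Type*} {H : SimpleGraph V} {u v x y : V} (p : H.Walk x y) :
    (H.deleteEdges {s(u,v)}).Reachable x y ∨ (H.deleteEdges {s(u,v)}).Reachable x u ∨
      (H.deleteEdges {s(u,v)}).Reachable x v := by
  induction p with
  | nil => exact Or.inl (Reachable.refl _)
  | @cons a b c h q ih =>
    by_cases he : s(a, b) = s(u, v)
    · rcases Sym2.eq_iff.mp he with ⟨rfl, rfl⟩ | ⟨rfl, rfl⟩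
      · exact Or.inr (Or.inl (Reachable.refl _))
      · exact Or.inr (Or.inr (Reachable.refl _))
    · have hadj : (H.deleteEdges {s(u,v)}).Adj a b := by
        rw [deleteEdges_adj]; exact ⟨h, by simpa using he⟩
      rcases ih with h1 | h1 | h1
      · exact Or.inl (hadj.reachable.trans h1)
      · exact Or.inr (Or.inl (hadj.reachable.trans h1))
      · exact Or.inr (Or.inr (hadj.reachable.trans h1))

private lemma omega_deleteEdge_le {V : Type*} [Fintype V] (H : SimpleGraph V) (e : Sym2 V) :
    omega (H.deleteEdges {e}) ≤ omega H + 1 := by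
  classical
  induction e using Sym2.ind with
  | _ u v =>
  set G' := H.deleteEdges {s(u,v)} with hG'
  haveI : Fintype G'.ConnectedComponent := Fintype.ofFinite _
  haveI : Fintype H.ConnectedComponent := Fintype.ofFinite _
  set φ : G'.ConnectedComponent → H.ConnectedComponent :=
    ConnectedComponent.map (Hom.ofLE (H.deleteEdges_le _)) with hφ
  have hφmk : ∀ x : V, φ (G'.connectedComponentMk x) = H.connectedComponentMk x := fun x => rfl
  have key : ∀ x y : V, H.Reachable x y →
      G'.Reachable x y ∨ G'.Reachable x u ∨ G'.Reachable x v := by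
    intro x y hr
    exact walk_aux hr.some
  set A : Finset G'.ConnectedComponent :=
    univ \ {G'.connectedComponentMk u, G'.connectedComponentMk v} with hA
  set B : Finset H.ConnectedComponent := univ \ {H.connectedComponentMk u} with hB
  have hmem : ∀ c ∈ A, ∀ x : V, G'.connectedComponentMk x = c →
      ¬ G'.Reachable x u ∧ ¬ G'.Reachable x v := by
    intro c hc x hx
    rw [hA, Finset.mem_sdiff, Finset.mem_insert, Finset.mem_singleton] at hc
    push_neg at hc
    constructor
    · intro hr; exact hc.2.1 (hx ▸ (ConnectedComponent.eq.mpr hr))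
    · intro hr; exact hc.2.2 (hx ▸ (ConnectedComponent.eq.mpr hr))
  have hmaps : ∀ c ∈ A, φ c ∈ B := by
    intro c hc
    obtain ⟨x, rfl⟩ := c.exists_rep
    rw [hB, Finset.mem_sdiff, Finset.mem_singleton]
    refine ⟨Finset.mem_univ _, ?_⟩
    intro hcon
    have : H.Reachable x u := ConnectedComponent.eq.mp hcon
    rcases key x u this with h1 | h1 | h1
    · exact (hmem _ hc x rfl).1 h1
    · exact (hmem _ hc x rfl).1 h1
    · exact (hmem _ hc x rfl).2 h1
  have hinj : Set.InjOn φ A := by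
    intro c1 h1 c2 h2 heq
    obtain ⟨x, rfl⟩ := c1.exists_rep
    obtain ⟨y, rfl⟩ := c2.exists_rep
    have : H.Reachable x y := ConnectedComponent.eq.mp heq
    rcases key x y this with h1' | h1' | h1'
    · exact ConnectedComponent.eq.mpr h1'
    · exact absurd h1' (hmem _ h1 x rfl).1
    · exact absurd h1' (hmem _ h1 x rfl).2
  have hAB : A.card ≤ B.card := Finset.card_le_card_of_injOn φ hmaps hinj
  have hBcard : B.card = Fintype.card H.ConnectedComponent - 1 := by
    rw [hB, Finset.card_sdiff_of_subset (by simp), Finset.card_singleton, Finset.card_univ]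
  have hAcard : Fintype.card G'.ConnectedComponent ≤ A.card + 2 := by
    have := Finset.card_sdiff_add_card (univ : Finset G'.ConnectedComponent)
      {G'.connectedComponentMk u, G'.connectedComponentMk v}
    have h2 : ({G'.connectedComponentMk u, G'.connectedComponentMk v} :
        Finset G'.ConnectedComponent).card ≤ 2 := Finset.card_insert_le _ _ |>.trans (by simp)
    rw [← Finset.card_univ]
    calc (univ : Finset G'.ConnectedComponent).card
        ≤ (univ ∪ {G'.connectedComponentMk u, G'.connectedComponentMk v}).card :=
          Finset.card_le_card (Finset.subset_union_left)
      _ = A.card + _ := this.symm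
      _ ≤ A.card + 2 := by exact Nat.add_le_add_left h2 _
  have hpos : 1 ≤ Fintype.card H.ConnectedComponent :=
    Fintype.card_pos_iff.mpr ⟨H.connectedComponentMk u⟩
  have : Fintype.card G'.ConnectedComponent ≤ Fintype.card H.ConnectedComponent + 1 := by omega
  simpa [omega, Nat.card_eq_fintype_card] using this

private lemma omega_deleteEdges_le {V : Type*} [Fintype V] (H : SimpleGraph V)
    (s : Finset (Sym2 V)) : omega (H.deleteEdges ↑s) ≤ omega H + s.card := by
  classical
  induction s using Finset.induction with
  | empty => simp
  | @insert a s ha ih =>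
    have heq : H.deleteEdges ↑(insert a s) = (H.deleteEdges ↑s).deleteEdges {a} := by
      rw [deleteEdges_deleteEdges]
      congr 1
      ext e
      simp [or_comm]
    rw [heq, Finset.card_insert_of_notMem ha]
    calc omega ((H.deleteEdges ↑s).deleteEdges {a}) ≤ omega (H.deleteEdges ↑s) + 1 :=
          omega_deleteEdge_le _ _
      _ ≤ omega H + s.card + 1 := Nat.add_le_add_right ih 1
      _ = omega H + (s.card + 1) := by ring

/-- Number of edges of `G` having color `c`. -/
noncomputable def colorCount {V C : Type*} (G : SimpleGraph V)
    (color : Sym2 V → C) (c : C) : ℕ :=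
  Nat.card {e : Sym2 V // e ∈ G.edgeSet ∧ color e = c}

/-- `G` is `f`-chromatic: each color `c` appears on at most `f c` edges. -/
def IsChromatic {V C : Type*} (G : SimpleGraph V)
    (color : Sym2 V → C) (f : C → ℕ) : Prop :=
  ∀ c, colorCount G color c ≤ f c

/-- `G - E_R(G)` : delete all edges whose color lies in `R`. -/
def delR {V C : Type*} (G : SimpleGraph V) (color : Sym2 V → C)
    (R : Finset C) : SimpleGraph V :=
  G.deleteEdges {e | color e ∈ R}

theorem stmt2 {V C : Type*} [Fintype V] (G : SimpleGraph V) (color : Sym2 V → C)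
    (f : C → ℕ) (m : ℕ) (hm : m ≤ Fintype.card V)
    (F : SimpleGraph V) (hFG : F ≤ G) (hFa : F.IsAcyclic) (hFm : omega F = m)
    (hFc : IsChromatic F color f) :
    ∀ R : Finset C, omega (delR G color R) ≤ m + ∑ c ∈ R, f c := by
  classical
  intro R
  have hle : delR F color R ≤ delR G color R := by
    intro a b hab
    rw [delR, deleteEdges_adj] at hab ⊢
    exact ⟨hFG hab.1, hab.2⟩
  have h1 : omega (delR G color R) ≤ omega (delR F color R) := omega_le_of_le hle
  set s : Finset (Sym2 V) := F.edgeFinset.filter (fun e => color e ∈ R) with hs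
  have heq : delR F color R = F.deleteEdges ↑s := by
    ext a b
    simp only [delR, deleteEdges_adj, hs, Finset.coe_filter, Set.mem_setOf_eq,
      Set.mem_setOf_eq, mem_edgeFinset, mem_edgeSet]
    tauto
  have h2 : omega (delR F color R) ≤ omega F + s.card := heq ▸ omega_deleteEdges_le F s
  have h3 : s.card ≤ ∑ c ∈ R, f c := by
    rw [Finset.card_eq_sum_card_fiberwise (f := color) (s := s) (t := R)
      (fun e he => (Finset.mem_filter.mp (Finset.mem_coe.mp he)).2)]
    apply Finset.sum_le_sum
    intro c hc
    refine le_trans ?_ (hFc c)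
    rw [colorCount, Nat.card_eq_fintype_card, Fintype.card_subtype]
    apply Finset.card_le_card
    intro e he
    simp only [hs, Finset.mem_filter, mem_edgeFinset] at he
    simp [he.1.1, he.2]
  calc omega (delR G color R) ≤ omega F + s.card := h1.trans h2
    _ ≤ m + ∑ c ∈ R, f c := by rw [hFm] at *; omega
end

section
/- Let (G, C, color) be an edge-colored graph of order at least m, and let f be a function from C to the non-negative integers. If for every subset R of C the number of components of G - E_R(G) is at most m + sum over c in R of f(c), then G has an f-chromatic spanning forest with exactly m components. -/
set_option linter.unusedSectionVars false


open SimpleGraph Finset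

/-! ### Auxiliary lemmas -/

section Aux

variable {V : Type*} [Fintype V]

instance (priority := 100) instFiniteCC (G : SimpleGraph V) : Finite G.ConnectedComponent :=
  Quot.finite _

instance (priority := 100) instFiniteSym2 : Finite (Sym2 V) :=
  Finite.of_surjective ((Sym2.mk (α := V)).uncurry : V × V → Sym2 V) Sym2.mk_surjective

lemma omega_anti {A B : SimpleGraph V} (h : A ≤ B) : omega B ≤ omega A := by
  apply Nat.card_le_card_of_surjective
    (SimpleGraph.ConnectedComponent.map (SimpleGraph.Hom.ofLE h))
  intro c
  refine c.ind fun v => ⟨A.connectedComponentMk v, rfl⟩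

lemma reachable_of_forall_adj {A B : SimpleGraph V} (hAB : ∀ u v, B.Adj u v → A.Reachable u v)
    {u v : V} (h : B.Reachable u v) : A.Reachable u v := by
  obtain ⟨w⟩ := h
  induction w with
  | nil => exact Reachable.refl _
  | cons hadj _ ih => exact (hAB _ _ hadj).trans ih

lemma omega_eq_of_le {A B : SimpleGraph V} (hle : A ≤ B)
    (hAB : ∀ u v, B.Adj u v → A.Reachable u v) : omega A = omega B := by
  refine le_antisymm ?_ (omega_anti hle)
  apply Nat.card_le_card_of_injective
    (SimpleGraph.ConnectedComponent.map (SimpleGraph.Hom.ofLE hle))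
  intro a b
  refine SimpleGraph.ConnectedComponent.ind₂ (fun x y hxy => ?_) a b
  simp only [SimpleGraph.ConnectedComponent.map_mk,
    SimpleGraph.Hom.ofLE_apply, SimpleGraph.ConnectedComponent.eq] at hxy ⊢
  exact reachable_of_forall_adj hAB hxy

lemma omega_bot : omega (⊥ : SimpleGraph V) = Fintype.card V := by
  have hb : Function.Bijective ((⊥ : SimpleGraph V).connectedComponentMk) := by
    constructor
    · intro x y hxy
      exact (SimpleGraph.reachable_bot).mp (SimpleGraph.ConnectedComponent.exact hxy)
    · exact Quot.mk_surjective
  rw [omega, ← Nat.card_eq_of_bijective _ hb, Nat.card_eq_fintype_card]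

lemma reach_cases {K : SimpleGraph V} {u v x y : V}
    (h : (K ⊔ edge u v).Reachable x y) :
    K.Reachable x y ∨
      ((K.Reachable x u ∨ K.Reachable x v) ∧ (K.Reachable y u ∨ K.Reachable y v)) := by
  obtain ⟨w⟩ := h
  induction w with
  | nil => exact Or.inl (Reachable.refl _)
  | @cons a b c hadj p ih =>
    rw [sup_adj] at hadj
    rcases hadj with hK | hE
    · rcases ih with h1 | ⟨hb, hy⟩
      · exact Or.inl (hK.reachable.trans h1)
      · refine Or.inr ⟨?_, hy⟩
        rcases hb with h' | h'
        exacts [Or.inl (hK.reachable.trans h'), Or.inr (hK.reachable.trans h')]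
    · rw [edge_adj] at hE
      obtain ⟨hcase, hne⟩ := hE
      have hb : K.Reachable b u ∨ K.Reachable b v := by
        rcases hcase with ⟨rfl, rfl⟩ | ⟨rfl, rfl⟩
        exacts [Or.inr (Reachable.refl _), Or.inl (Reachable.refl _)]
      have ha : K.Reachable a u ∨ K.Reachable a v := by
        rcases hcase with ⟨rfl, rfl⟩ | ⟨rfl, rfl⟩
        exacts [Or.inl (Reachable.refl _), Or.inr (Reachable.refl _)]
      refine Or.inr ⟨ha, ?_⟩
      rcases ih with h1 | ⟨_, hy⟩
      · rcases hb with h' | h'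
        exacts [Or.inl (h1.symm.trans h'), Or.inr (h1.symm.trans h')]
      · exact hy

lemma phi_eq_cases {K : SimpleGraph V} {u v : V} (a b : K.ConnectedComponent)
    (hab : a.map (SimpleGraph.Hom.ofLE (le_sup_left : K ≤ K ⊔ edge u v))
        = b.map (SimpleGraph.Hom.ofLE le_sup_left)) :
    a = b ∨ ((a = K.connectedComponentMk u ∨ a = K.connectedComponentMk v) ∧
      (b = K.connectedComponentMk u ∨ b = K.connectedComponentMk v)) := by
  revert hab
  refine SimpleGraph.ConnectedComponent.ind₂ (fun x y hxy => ?_) a b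
  simp only [SimpleGraph.ConnectedComponent.map_mk,
    SimpleGraph.Hom.ofLE_apply, SimpleGraph.ConnectedComponent.eq] at hxy ⊢
  rcases reach_cases hxy with h1 | ⟨hx, hy⟩
  · exact Or.inl h1
  · exact Or.inr ⟨hx, hy⟩

lemma omega_sup_edge_eq {K : SimpleGraph V} {u v : V} (hne : u ≠ v)
    (hnr : ¬K.Reachable u v) : omega K = omega (K ⊔ edge u v) + 1 := by
  classical
  set G' := K ⊔ edge u v with hG'
  set φ : K.ConnectedComponent → G'.ConnectedComponent :=
    SimpleGraph.ConnectedComponent.map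
      (SimpleGraph.Hom.ofLE (le_sup_left : K ≤ K ⊔ edge u v)) with hφ
  have hcc : K.connectedComponentMk u ≠ K.connectedComponentMk v := by
    intro hcon
    exact hnr (SimpleGraph.ConnectedComponent.exact hcon)
  set ψ : K.ConnectedComponent → G'.ConnectedComponent ⊕ Unit := fun a =>
    if a = K.connectedComponentMk v then Sum.inr () else Sum.inl (φ a) with hψ
  have hadj : G'.Adj u v := by
    rw [hG', sup_adj, edge_adj]
    exact Or.inr ⟨Or.inl ⟨rfl, rfl⟩, hne⟩
  have hinj : Function.Injective ψ := by
    intro a b hab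
    by_cases hav : a = K.connectedComponentMk v <;>
      by_cases hbv : b = K.connectedComponentMk v
    · rw [hav, hbv]
    · simp only [hψ, if_pos hav, if_neg hbv] at hab; exact absurd hab (by simp)
    · simp only [hψ, if_neg hav, if_pos hbv] at hab; exact absurd hab (by simp)
    · simp only [hψ, if_neg hav, if_neg hbv, Sum.inl.injEq] at hab
      rcases phi_eq_cases a b hab with h1 | ⟨ha', hb'⟩
      · exact h1
      · rcases ha' with ha' | ha'
        · rcases hb' with hb' | hb'
          · rw [ha', hb']
          · exact absurd hb' hbv
        · exact absurd ha' hav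
  have hsurj : Function.Surjective ψ := by
    rintro (c | ⟨⟩)
    · refine c.ind fun x => ?_
      by_cases hx : K.connectedComponentMk x = K.connectedComponentMk v
      · refine ⟨K.connectedComponentMk u, ?_⟩
        simp only [hψ, if_neg hcc, hφ, SimpleGraph.ConnectedComponent.map_mk,
          SimpleGraph.Hom.ofLE_apply, Sum.inl.injEq]
        have h1 : G'.Reachable u x := by
          refine hadj.reachable.trans ?_
          exact SimpleGraph.Reachable.mono le_sup_left
            (SimpleGraph.ConnectedComponent.exact hx).symm
        exact SimpleGraph.ConnectedComponent.sound h1.symm |>.symm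
      · refine ⟨K.connectedComponentMk x, ?_⟩
        simp only [hψ, if_neg hx, hφ, SimpleGraph.ConnectedComponent.map_mk,
          SimpleGraph.Hom.ofLE_apply]
    · exact ⟨K.connectedComponentMk v, by simp [hψ]⟩
  have hcard := Nat.card_eq_of_bijective ψ ⟨hinj, hsurj⟩
  rw [omega, omega, hcard, Nat.card_sum]
  simp

lemma deleteEdges_sup_edge {G : SimpleGraph V} {u v : V} (h : G.Adj u v) :
    G.deleteEdges {s(u, v)} ⊔ edge u v = G := by
  ext a b
  simp only [sup_adj, deleteEdges_adj, Set.mem_singleton_iff, edge_adj]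
  constructor
  · rintro (⟨ha, _⟩ | ⟨⟨rfl, rfl⟩ | ⟨rfl, rfl⟩, _⟩)
    exacts [ha, h, h.symm]
  · intro ha
    by_cases he : s(a, b) = s(u, v)
    · refine Or.inr ⟨?_, ha.ne⟩
      rw [Sym2.eq_iff] at he
      exact he
    · exact Or.inl ⟨ha, he⟩

lemma isAcyclic_anti {A B : SimpleGraph V} (h : A ≤ B) (hB : B.IsAcyclic) : A.IsAcyclic := by
  intro w c hc
  exact hB (c.mapLe h) (hc.mapLe h)

lemma isAcyclic_sup_edge {F : SimpleGraph V} {u v : V} (hF : F.IsAcyclic) (hne : u ≠ v)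
    (hnr : ¬F.Reachable u v) : (F ⊔ edge u v).IsAcyclic := by
  intro w c hc
  by_cases he : s(u, v) ∈ c.edges
  · have h2 := (adj_and_reachable_delete_edges_iff_exists_cycle.mpr ⟨w, c, hc, he⟩).2
    apply hnr
    refine reachable_of_forall_adj (B := (F ⊔ edge u v) \ fromEdgeSet {s(u, v)}) ?_ h2
    intro a b hab
    rw [sdiff_adj, sup_adj, fromEdgeSet_adj, Set.mem_singleton_iff] at hab
    obtain ⟨hor, hnot⟩ := hab
    rcases hor with hFab | hEab
    · exact hFab.reachable
    · rw [edge_adj] at hEab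
      exfalso
      apply hnot
      refine ⟨?_, hEab.2⟩
      rw [Sym2.eq_iff]
      exact hEab.1
  · have hsub : ∀ e ∈ c.edges, e ∈ F.edgeSet := by
      intro e hce
      have := c.edges_subset_edgeSet hce
      rw [edgeSet_sup, Set.mem_union] at this
      rcases this with h1 | h1
      · exact h1
      · rw [edge_edgeSet_of_ne hne, Set.mem_singleton_iff] at h1
        exact absurd (h1 ▸ hce) he
    exact hF (c.transfer F hsub) (hc.transfer hsub)

lemma forest_count : ∀ (n : ℕ) (F : SimpleGraph V), F.IsAcyclic → F.edgeSet.ncard = n →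
    omega F + n = Fintype.card V := by
  intro n
  induction n with
  | zero =>
    intro F _ h0
    have hF : F = ⊥ := by
      rw [← edgeSet_eq_empty]
      exact (Set.ncard_eq_zero (Set.toFinite _)).mp h0
    rw [hF, omega_bot, add_zero]
  | succ n ih =>
    intro F hF hcard
    have hne : F.edgeSet.Nonempty := by
      rw [Set.nonempty_iff_ne_empty]
      intro hcon
      rw [hcon] at hcard
      simp at hcard
    obtain ⟨e, he⟩ := hne
    induction e using Sym2.ind with
    | _ u v =>
    have hadj : F.Adj u v := he
    have hneuv : u ≠ v := hadj.ne
    set K := F.deleteEdges {s(u, v)} with hK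
    have hbr : F.IsBridge s(u, v) := (isAcyclic_iff_forall_adj_isBridge.mp hF) hadj
    have hnr : ¬K.Reachable u v := (isBridge_iff.mp hbr)
    have hsup : K ⊔ edge u v = F := deleteEdges_sup_edge hadj
    have hom : omega K = omega F + 1 := by
      have := omega_sup_edge_eq (K := K) hneuv hnr
      rwa [hsup] at this
    have hKacyc : K.IsAcyclic := isAcyclic_anti (deleteEdges_le _) hF
    have hKcard : K.edgeSet.ncard = n := by
      rw [hK, edgeSet_deleteEdges, Set.ncard_diff_singleton_of_mem he, hcard]
      omega
    have := ih K hKacyc hKcard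
    omega

lemma edge_le {H : SimpleGraph V} {u v : V} (h : H.Adj u v) : edge u v ≤ H := by
  intro a b hab
  rw [edge_adj] at hab
  rcases hab.1 with ⟨rfl, rfl⟩ | ⟨rfl, rfl⟩
  exacts [h, h.symm]

lemma exists_cross_edge {F H : SimpleGraph V} (hle : F ≤ H) (hne : omega F ≠ omega H) :
    ∃ u v, H.Adj u v ∧ ¬F.Reachable u v := by
  by_contra hcon
  push_neg at hcon
  exact hne (omega_eq_of_le hle hcon)

lemma extend_forest (H : SimpleGraph V) :
    ∀ (n : ℕ) (F : SimpleGraph V), omega F ≤ n → F ≤ H → F.IsAcyclic →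
      ∃ F', F ≤ F' ∧ F' ≤ H ∧ F'.IsAcyclic ∧ omega F' = omega H := by
  intro n
  induction n with
  | zero =>
    intro F hn hle hac
    have h1 : omega H ≤ omega F := omega_anti hle
    exact ⟨F, le_refl _, hle, hac, by omega⟩
  | succ n ih =>
    intro F hn hle hac
    by_cases heq : omega F = omega H
    · exact ⟨F, le_refl _, hle, hac, heq⟩
    · obtain ⟨u, v, hadj, hnr⟩ := exists_cross_edge hle heq
      have hneuv : u ≠ v := hadj.ne
      set F' := F ⊔ edge u v with hF'
      have hF'le : F' ≤ H := sup_le hle (edge_le hadj)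
      have hF'ac : F'.IsAcyclic := isAcyclic_sup_edge hac hneuv hnr
      have hom : omega F = omega F' + 1 := omega_sup_edge_eq hneuv hnr
      obtain ⟨F'', h1, h2, h3, h4⟩ := ih F' (by omega) hF'le hF'ac
      exact ⟨F'', le_trans le_sup_left h1, h2, h3, h4⟩

lemma forest_bound {F A : SimpleGraph V} (hle : F ≤ A) (hF : F.IsAcyclic) :
    F.edgeSet.ncard + omega A ≤ Fintype.card V := by
  have h1 := forest_count F.edgeSet.ncard F hF rfl
  have h2 : omega A ≤ omega F := omega_anti hle
  omega

lemma omega_supermodular (A B : SimpleGraph V) :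
    omega A + omega B ≤ omega (A ⊔ B) + omega (A ⊓ B) := by
  obtain ⟨F0, _, hF0le, hF0ac, hF0om⟩ :=
    extend_forest (A ⊓ B) (omega (⊥ : SimpleGraph V)) ⊥ le_rfl bot_le isAcyclic_bot
  obtain ⟨F1, hF01, hF1le, hF1ac, hF1om⟩ :=
    extend_forest (A ⊔ B) (omega F0) F0 le_rfl
      (le_trans hF0le (le_trans inf_le_left le_sup_left)) hF0ac
  have ha : (F1 ⊓ A).edgeSet.ncard + omega A ≤ Fintype.card V :=
    forest_bound inf_le_right (isAcyclic_anti inf_le_left hF1ac)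
  have hb : (F1 ⊓ B).edgeSet.ncard + omega B ≤ Fintype.card V :=
    forest_bound inf_le_right (isAcyclic_anti inf_le_left hF1ac)
  have hsub : F1.edgeSet ⊆ A.edgeSet ∪ B.edgeSet := by
    rw [← edgeSet_sup]
    exact edgeSet_mono hF1le
  have hieq : (F1 ⊓ A).edgeSet.ncard + (F1 ⊓ B).edgeSet.ncard
      = (F1 ⊓ (A ⊓ B)).edgeSet.ncard + F1.edgeSet.ncard := by
    have h1 := Set.ncard_inter_add_ncard_union (F1.edgeSet ∩ A.edgeSet)
      (F1.edgeSet ∩ B.edgeSet) (Set.toFinite _) (Set.toFinite _)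
    have e1 : F1.edgeSet ∩ A.edgeSet ∩ (F1.edgeSet ∩ B.edgeSet)
        = F1.edgeSet ∩ (A.edgeSet ∩ B.edgeSet) := by
      ext e; simp only [Set.mem_inter_iff]; tauto
    have e2 : F1.edgeSet ∩ A.edgeSet ∪ F1.edgeSet ∩ B.edgeSet = F1.edgeSet := by
      rw [← Set.inter_union_distrib_left]
      exact Set.inter_eq_self_of_subset_left hsub
    rw [e1, e2] at h1
    simp only [edgeSet_inf]
    omega
  have hf0 : F0.edgeSet.ncard ≤ (F1 ⊓ (A ⊓ B)).edgeSet.ncard := by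
    apply Set.ncard_le_ncard _ (Set.toFinite _)
    exact edgeSet_mono (le_inf hF01 hF0le)
  have hc1 : omega (A ⊔ B) + F1.edgeSet.ncard = Fintype.card V := by
    rw [← hF1om]; exact forest_count _ F1 hF1ac rfl
  have hc0 : omega (A ⊓ B) + F0.edgeSet.ncard = Fintype.card V := by
    rw [← hF0om]; exact forest_count _ F0 hF0ac rfl
  omega

lemma prune_forest {m : ℕ} (hm : m ≤ Fintype.card V) :
    ∀ (k : ℕ) (F : SimpleGraph V), F.edgeSet.ncard ≤ k → F.IsAcyclic → omega F ≤ m →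
      ∃ F', F' ≤ F ∧ F'.IsAcyclic ∧ omega F' = m := by
  intro k
  induction k with
  | zero =>
    intro F hk hac hω
    have hF : F = ⊥ := by
      rw [← edgeSet_eq_empty]
      exact (Set.ncard_eq_zero (Set.toFinite _)).mp (Nat.le_zero.mp hk)
    refine ⟨F, le_refl _, hac, ?_⟩
    rw [hF, omega_bot] at hω ⊢
    omega
  | succ k ih =>
    intro F hk hac hω
    by_cases heq : omega F = m
    · exact ⟨F, le_refl _, hac, heq⟩
    · have hne : F.edgeSet.Nonempty := by
        rw [Set.nonempty_iff_ne_empty]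
        intro hcon
        have : F = ⊥ := edgeSet_eq_empty.mp hcon
        rw [this, omega_bot] at hω heq
        omega
      obtain ⟨e, he⟩ := hne
      induction e using Sym2.ind with
      | _ u v =>
      have hadj : F.Adj u v := he
      set K := F.deleteEdges {s(u, v)} with hKdef
      have hbr : F.IsBridge s(u, v) := (isAcyclic_iff_forall_adj_isBridge.mp hac) hadj
      have hnr : ¬K.Reachable u v := (isBridge_iff.mp hbr)
      have hsup : K ⊔ edge u v = F := deleteEdges_sup_edge hadj
      have hom : omega K = omega F + 1 := by
        have := omega_sup_edge_eq (K := K) hadj.ne hnr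
        rwa [hsup] at this
      have hKacyc : K.IsAcyclic := isAcyclic_anti (deleteEdges_le _) hac
      have hKcard : K.edgeSet.ncard ≤ k := by
        rw [hKdef, edgeSet_deleteEdges, Set.ncard_diff_singleton_of_mem he]
        omega
      obtain ⟨F', h1, h2, h3⟩ := ih K hKcard hKacyc (by omega)
      exact ⟨F', le_trans h1 (deleteEdges_le _), h2, h3⟩

lemma colorCount_mono {C : Type*} {F G : SimpleGraph V} (h : F ≤ G) (color : Sym2 V → C)
    (c : C) : colorCount F color c ≤ colorCount G color c := by
  apply Nat.card_le_card_of_injective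
    (fun x => (⟨x.1, edgeSet_mono h x.2.1, x.2.2⟩ :
      {e : Sym2 V // e ∈ G.edgeSet ∧ color e = c}))
  intro x y hxy
  apply Subtype.ext
  have h2 := congrArg Subtype.val hxy
  simpa using h2

lemma deleteEdges_inf_deleteEdges (G : SimpleGraph V) (s t : Set (Sym2 V)) :
    G.deleteEdges s ⊓ G.deleteEdges t = G.deleteEdges (s ∪ t) := by
  ext a b
  simp only [inf_adj, deleteEdges_adj, Set.mem_union]
  tauto

lemma deleteEdges_sup_deleteEdges (G : SimpleGraph V) (s t : Set (Sym2 V)) :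
    G.deleteEdges s ⊔ G.deleteEdges t = G.deleteEdges (s ∩ t) := by
  ext a b
  simp only [sup_adj, deleteEdges_adj, Set.mem_inter_iff]
  tauto

lemma colorCount_bot {C : Type*} (color : Sym2 V → C) (c : C) :
    colorCount (⊥ : SimpleGraph V) color c = 0 := by
  have : IsEmpty {e : Sym2 V // e ∈ (⊥ : SimpleGraph V).edgeSet ∧ color e = c} := by
    constructor
    rintro ⟨e, he, -⟩
    rw [edgeSet_bot] at he
    exact he
  exact Nat.card_of_isEmpty

lemma delR_empty {C : Type*} (G : SimpleGraph V) (color : Sym2 V → C) :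
    delR G color (∅ : Finset C) = G := by
  have hs : {e : Sym2 V | color e ∈ (∅ : Finset C)} = (∅ : Set (Sym2 V)) := by
    ext e; simp
  rw [delR, hs, deleteEdges_empty]

lemma chromatic_case {C : Type*} (G : SimpleGraph V) (color : Sym2 V → C) (f : C → ℕ)
    (m : ℕ) (hm : m ≤ Fintype.card V) (hωG : omega G ≤ m) (hchrom : IsChromatic G color f) :
    ∃ F : SimpleGraph V, F ≤ G ∧ F.IsAcyclic ∧ omega F = m ∧ IsChromatic F color f := by
  obtain ⟨F1, -, hF1le, hF1ac, hF1om⟩ :=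
    extend_forest G (omega (⊥ : SimpleGraph V)) ⊥ le_rfl bot_le isAcyclic_bot
  obtain ⟨F', hle, hac, hom⟩ :=
    prune_forest hm F1.edgeSet.ncard F1 le_rfl hF1ac (by omega)
  exact ⟨F', le_trans hle hF1le, hac, hom,
    fun c => le_trans (colorCount_mono (le_trans hle hF1le) _ _) (hchrom c)⟩

lemma sum_lower {α : Type*} (w g : α → ℕ) (m : ℕ) :
    ∀ l : List α, (∀ e ∈ l, m + 1 + g e ≤ w e) →
      l.length * (m + 1) + (l.map g).sum ≤ (l.map w).sum := by
  intro l
  induction l with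
  | nil => simp
  | cons e l ih =>
    intro hb
    simp only [List.map_cons, List.sum_cons, List.length_cons]
    have h1 := hb e List.mem_cons_self
    have h2 := ih (fun e' he' => hb e' (List.mem_cons_of_mem _ he'))
    have h3 : (l.length + 1) * (m + 1) = l.length * (m + 1) + (m + 1) := by ring
    linarith

end Aux

/-! ### The accumulation (Rado-style) argument -/

section Accum

variable {V C : Type*} [Fintype V] [DecidableEq C]

/-- Union of the finsets `R e` over a list of edges. -/
def unionR (R : Sym2 V → Finset C) : List (Sym2 V) → Finset C
  | [] => ∅
  | e :: l => R e ∪ unionR R l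

lemma mem_unionR {R : Sym2 V → Finset C} {c : C} :
    ∀ {l : List (Sym2 V)}, c ∈ unionR R l ↔ ∃ e ∈ l, c ∈ R e := by
  intro l
  induction l with
  | nil => simp [unionR]
  | cons e l ih => simp [unionR, ih]

lemma accum (G : SimpleGraph V) (color : Sym2 V → C) (f : C → ℕ) (m : ℕ)
    (h : ∀ R : Finset C, omega (delR G color R) ≤ m + ∑ c ∈ R, f c)
    (c₀ : C) (R : Sym2 V → Finset C) :
    ∀ l : List (Sym2 V), l ≠ [] → l.Nodup → (∀ e ∈ l, color e = c₀) →
      (∀ e ∈ l, c₀ ∉ R e) →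
      (l.map fun e => omega (G.deleteEdges ({e' | color e' ∈ R e} ∪ {e}))).sum
        + ∑ c ∈ unionR R l, f c
      ≤ omega (G.deleteEdges ({e' | color e' ∈ unionR R l} ∪ {e' | e' ∈ l}))
        + (l.length - 1) * m + (l.map fun e => ∑ c ∈ R e, f c).sum := by
  intro l
  induction l with
  | nil => intro hne; exact absurd rfl hne
  | cons e l ih =>
    intro _ hnd hcol hc₀
    have hce : color e = c₀ := hcol e List.mem_cons_self
    have hc₀e : c₀ ∉ R e := hc₀ e List.mem_cons_self
    have henl : e ∉ l := (List.nodup_cons.mp hnd).1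
    have hu : unionR R (e :: l) = R e ∪ unionR R l := rfl
    by_cases hl : l = []
    · subst hl
      have hset : ({e' | color e' ∈ unionR R [e]} ∪ {e' | e' ∈ ([e] : List (Sym2 V))} :
          Set (Sym2 V)) = {e' | color e' ∈ R e} ∪ {e} := by
        ext x
        simp [unionR]
      rw [hset]
      simp [unionR]
    · have hlen : 1 ≤ l.length := by
        cases l with
        | nil => exact absurd rfl hl
        | cons a t => simp
      have hIH := ih hl (List.nodup_cons.mp hnd).2
        (fun e' he' => hcol e' (List.mem_cons_of_mem _ he'))
        (fun e' he' => hc₀ e' (List.mem_cons_of_mem _ he'))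
      have hc₀U : c₀ ∉ unionR R l := by
        rw [mem_unionR]
        rintro ⟨e', he', hc⟩
        exact hc₀ e' (List.mem_cons_of_mem _ he') hc
      have hinf : G.deleteEdges ({e' | color e' ∈ R e} ∪ {e}) ⊓
            G.deleteEdges ({e' | color e' ∈ unionR R l} ∪ {e' | e' ∈ l})
          = G.deleteEdges ({e' | color e' ∈ unionR R (e :: l)} ∪ {e' | e' ∈ e :: l}) := by
        rw [deleteEdges_inf_deleteEdges, hu]
        congr 1
        ext x
        simp only [Set.mem_union, Set.mem_setOf_eq, Set.mem_singleton_iff, List.mem_cons,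
          Finset.mem_union]
        tauto
      have hsup : G.deleteEdges ({e' | color e' ∈ R e} ∪ {e}) ⊔
            G.deleteEdges ({e' | color e' ∈ unionR R l} ∪ {e' | e' ∈ l})
          = delR G color (R e ∩ unionR R l) := by
        rw [deleteEdges_sup_deleteEdges]
        simp only [delR]
        congr 1
        ext x
        simp only [Set.mem_inter_iff, Set.mem_union, Set.mem_setOf_eq, Set.mem_singleton_iff,
          Finset.mem_inter]
        constructor
        · rintro ⟨h1 | rfl, h2 | h3⟩
          · exact ⟨h1, h2⟩
          · exact ((hc₀e ((hcol x (List.mem_cons_of_mem _ h3)) ▸ h1)).elim)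
          · exact ((hc₀U (hce ▸ h2)).elim)
          · exact (henl h3).elim
        · rintro ⟨h1, h2⟩
          exact ⟨Or.inl h1, Or.inl h2⟩
      have hkey1 : omega (G.deleteEdges ({e' | color e' ∈ R e} ∪ {e}))
            + omega (G.deleteEdges ({e' | color e' ∈ unionR R l} ∪ {e' | e' ∈ l}))
          ≤ omega (G.deleteEdges ({e' | color e' ∈ unionR R (e :: l)} ∪ {e' | e' ∈ e :: l}))
            + (m + ∑ c ∈ R e ∩ unionR R l, f c) := by
        have hsm := omega_supermodular (G.deleteEdges ({e' | color e' ∈ R e} ∪ {e}))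
          (G.deleteEdges ({e' | color e' ∈ unionR R l} ∪ {e' | e' ∈ l}))
        rw [hinf, hsup] at hsm
        have h2 := h (R e ∩ unionR R l)
        omega
      have hσ : (∑ c ∈ R e ∪ unionR R l, f c) + (∑ c ∈ R e ∩ unionR R l, f c)
          = (∑ c ∈ R e, f c) + ∑ c ∈ unionR R l, f c := Finset.sum_union_inter
      have e2 : (l.length - 1) * m + m = l.length * m := by
        calc (l.length - 1) * m + m = ((l.length - 1) + 1) * m := by ring
        _ = l.length * m := by rw [Nat.sub_add_cancel hlen]
      rw [hu] at hkey1
      simp only [List.map_cons, List.sum_cons, List.length_cons, Nat.add_sub_cancel, hu]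
      linarith [hIH, hkey1, hσ, e2]

end Accum

lemma main_aux {V C : Type*} [Fintype V] [DecidableEq C] :
    ∀ (n : ℕ) (G : SimpleGraph V) (color : Sym2 V → C) (f : C → ℕ) (m : ℕ),
      m ≤ Fintype.card V → G.edgeSet.ncard ≤ n →
      (∀ R : Finset C, omega (delR G color R) ≤ m + ∑ c ∈ R, f c) →
      ∃ F : SimpleGraph V, F ≤ G ∧ F.IsAcyclic ∧ omega F = m ∧ IsChromatic F color f := by
  intro n
  induction n with
  | zero =>
    intro G color f m hm hcard h
    have hωG : omega G ≤ m := by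
      have h0 := h ∅
      rwa [delR_empty, Finset.sum_empty, add_zero] at h0
    have hG : G = ⊥ := by
      rw [← edgeSet_eq_empty]
      exact (Set.ncard_eq_zero (Set.toFinite _)).mp (Nat.le_zero.mp hcard)
    subst hG
    exact chromatic_case _ color f m hm hωG (fun c => by rw [colorCount_bot]; omega)
  | succ n ih =>
    intro G color f m hm hcard h
    have hωG : omega G ≤ m := by
      have h0 := h ∅
      rwa [delR_empty, Finset.sum_empty, add_zero] at h0
    by_cases hchrom : IsChromatic G color f
    · exact chromatic_case G color f m hm hωG hchrom
    · rw [IsChromatic] at hchrom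
      push_neg at hchrom
      obtain ⟨c₀, hc₀⟩ := hchrom
      have hTfin : ({e : Sym2 V | e ∈ G.edgeSet ∧ color e = c₀}).Finite := Set.toFinite _
      have hcount : colorCount G color c₀ = hTfin.toFinset.card := by
        have h1 : colorCount G color c₀
            = Nat.card ({e : Sym2 V | e ∈ G.edgeSet ∧ color e = c₀}) := rfl
        rw [h1, Nat.card_coe_set_eq, Set.ncard_eq_toFinset_card _ hTfin]
      have hT1 : f c₀ + 1 ≤ hTfin.toFinset.card := by omega
      by_cases hkey : ∃ e ∈ hTfin.toFinset,
          ∀ R : Finset C, omega (delR (G.deleteEdges {e}) color R) ≤ m + ∑ c ∈ R, f c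
      · obtain ⟨e, heT, hGe⟩ := hkey
        have heE : e ∈ G.edgeSet := ((hTfin.mem_toFinset).mp heT).1
        have hsm : (G.deleteEdges {e}).edgeSet.ncard ≤ n := by
          rw [edgeSet_deleteEdges]
          have hd := Set.ncard_diff_singleton_of_mem heE
          have hpos : 0 < G.edgeSet.ncard :=
            (Set.ncard_pos (Set.toFinite _)).mpr ⟨e, heE⟩
          omega
        obtain ⟨F, h1, h2, h3, h4⟩ := ih (G.deleteEdges {e}) color f m hm hsm hGe
        exact ⟨F, le_trans h1 (deleteEdges_le _), h2, h3, h4⟩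
      · exfalso
        push_neg at hkey
        have hkey' : ∀ e : Sym2 V, ∃ R : Finset C, e ∈ hTfin.toFinset →
            (m + (∑ c ∈ R, f c) + 1 ≤ omega (G.deleteEdges ({e' | color e' ∈ R} ∪ {e}))
              ∧ c₀ ∉ R) := by
          intro e
          by_cases heT : e ∈ hTfin.toFinset
          · obtain ⟨R, hR⟩ := hkey e heT
            have hrw : delR (G.deleteEdges {e}) color R
                = G.deleteEdges ({e' | color e' ∈ R} ∪ {e}) := by
              rw [delR, deleteEdges_deleteEdges, Set.union_comm]
            rw [hrw] at hR
            have hineq : m + (∑ c ∈ R, f c) + 1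
                ≤ omega (G.deleteEdges ({e' | color e' ∈ R} ∪ {e})) := by omega
            refine ⟨R, fun _ => ⟨hineq, ?_⟩⟩
            intro hc₀R
            have hceq : color e = c₀ := ((hTfin.mem_toFinset).mp heT).2
            have habs : ({e' | color e' ∈ R} ∪ {e} : Set (Sym2 V)) = {e' | color e' ∈ R} := by
              apply Set.union_eq_self_of_subset_right
              intro x hx
              rw [Set.mem_singleton_iff] at hx
              subst hx
              show color x ∈ R
              rw [hceq]
              exact hc₀R
            rw [habs] at hineq
            have hR2 := h R
            rw [delR] at hR2
            omega
          · exact ⟨∅, fun hcon => absurd hcon heT⟩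
        choose Rfun hRfun using hkey'
        set l := hTfin.toFinset.toList with hldef
        have hmeml : ∀ e ∈ l, e ∈ hTfin.toFinset := fun e he => Finset.mem_toList.mp he
        have hlen : l.length = hTfin.toFinset.card := Finset.length_toList _
        have hlne : l ≠ [] := by
          intro hcon
          rw [hcon] at hlen
          simp at hlen
          omega
        have hcolors : ∀ e ∈ l, color e = c₀ :=
          fun e he => ((hTfin.mem_toFinset).mp (hmeml e he)).2
        have hc₀l : ∀ e ∈ l, c₀ ∉ Rfun e :=
          fun e he => (hRfun e (hmeml e he)).2
        have haccum := accum G color f m h c₀ Rfun l hlne (Finset.nodup_toList _) hcolors hc₀l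
        have hlow := sum_lower
          (fun e => omega (G.deleteEdges ({e' | color e' ∈ Rfun e} ∪ {e})))
          (fun e => ∑ c ∈ Rfun e, f c) m l
          (fun e he => by
            have h9 := (hRfun e (hmeml e he)).1
            show m + 1 + (∑ c ∈ Rfun e, f c)
              ≤ omega (G.deleteEdges ({e' | color e' ∈ Rfun e} ∪ {e}))
            omega)
        have hc₀Ul : c₀ ∉ unionR Rfun l := by
          rw [mem_unionR]
          rintro ⟨e, he, hc⟩
          exact hc₀l e he hc
        have hAeq : G.deleteEdges ({e' | color e' ∈ unionR Rfun l} ∪ {e' | e' ∈ l})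
            = delR G color (insert c₀ (unionR Rfun l)) := by
          rw [delR]
          ext a b
          simp only [deleteEdges_adj, Set.mem_union, Set.mem_setOf_eq, Finset.mem_insert]
          constructor
          · rintro ⟨hadj, hn⟩
            refine ⟨hadj, fun hcon => hn ?_⟩
            rcases hcon with hc | hU
            · right
              show s(a, b) ∈ l
              rw [hldef, Finset.mem_toList, hTfin.mem_toFinset]
              exact ⟨(mem_edgeSet G).mpr hadj, hc⟩
            · exact Or.inl hU
          · rintro ⟨hadj, hn⟩
            refine ⟨hadj, fun hcon => hn ?_⟩
            rcases hcon with hU | hml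
            · exact Or.inr hU
            · exact Or.inl (hcolors _ hml)
        have hup : omega (G.deleteEdges ({e' | color e' ∈ unionR Rfun l} ∪ {e' | e' ∈ l}))
            ≤ m + (f c₀ + ∑ c ∈ unionR Rfun l, f c) := by
          rw [hAeq]
          have h2 := h (insert c₀ (unionR Rfun l))
          rwa [Finset.sum_insert hc₀Ul] at h2
        have hN : f c₀ + 1 ≤ l.length := by omega
        have hlen1 : 1 ≤ l.length := by omega
        have e5 : l.length * (m + 1) = l.length * m + l.length := by ring
        have e6 : (l.length - 1) * m + m = l.length * m := by
          calc (l.length - 1) * m + m = ((l.length - 1) + 1) * m := by ring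
          _ = l.length * m := by rw [Nat.sub_add_cancel hlen1]
        linarith [hlow, haccum, hup, hN, e5, e6]

theorem stmt3 {V C : Type*} [Fintype V] (G : SimpleGraph V) (color : Sym2 V → C)
    (f : C → ℕ) (m : ℕ) (hm : m ≤ Fintype.card V)
    (h : ∀ R : Finset C, omega (delR G color R) ≤ m + ∑ c ∈ R, f c) :
    ∃ F : SimpleGraph V, F ≤ G ∧ F.IsAcyclic ∧ omega F = m ∧
      IsChromatic F color f := by
  classical
  exact main_aux G.edgeSet.ncard G color f m hm le_rfl h
end

section
/- Let G be a g-chromatic edge-colored graph of order n with more than C(n-m, 2) edges, where 1 <= m <= n-1. If g(c) <= (|E(G)|/(n-m)) * f(c) for every color c, then G has an f-chromatic spanning forest with exactly m components. -/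
open SimpleGraph Finset

section AuxSection
variable {V : Type*} [Fintype V]

namespace Aux

set_option linter.unusedSectionVars false

noncomputable instance (G : SimpleGraph V) : Fintype G.ConnectedComponent :=
  Fintype.ofFinite _

lemma omega_eq (G : SimpleGraph V) : omega G = Fintype.card G.ConnectedComponent :=
  Nat.card_eq_fintype_card

lemma cc_surj (G : SimpleGraph V) : Function.Surjective (G.connectedComponentMk) :=
  fun K => Quot.exists_rep K

lemma reachable_bot {u v : V} (h : (⊥ : SimpleGraph V).Reachable u v) : u = v := by
  obtain ⟨w⟩ := h
  cases w with
  | nil => rfl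
  | cons h _ => exact absurd h (by simp)

lemma omega_bot : omega (⊥ : SimpleGraph V) = Fintype.card V := by
  rw [omega_eq]
  have : (⊥ : SimpleGraph V).ConnectedComponent ≃ V :=
    { toFun := fun K => K.out
      invFun := fun v => SimpleGraph.connectedComponentMk _ v
      left_inv := fun K => K.out_eq
      right_inv := fun v => by
        exact reachable_bot (SimpleGraph.ConnectedComponent.eq.mp
          ((SimpleGraph.connectedComponentMk (⊥ : SimpleGraph V) v).out_eq)) }
  exact Fintype.card_congr this

lemma omega_le_card (G : SimpleGraph V) : omega G ≤ Fintype.card V := by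
  rw [omega_eq]
  exact Fintype.card_le_of_surjective _ (cc_surj G)

lemma omega_pos [Nonempty V] (G : SimpleGraph V) : 0 < omega G := by
  have : Nonempty G.ConnectedComponent := ⟨G.connectedComponentMk (Classical.arbitrary V)⟩
  rw [omega_eq]; exact Fintype.card_pos

lemma omega_anti {G H : SimpleGraph V} (h : G ≤ H) : omega H ≤ omega G := by
  rw [omega_eq, omega_eq]
  apply Fintype.card_le_of_surjective
    (SimpleGraph.ConnectedComponent.map (SimpleGraph.Hom.ofLE h))
  intro K
  obtain ⟨v, rfl⟩ := cc_surj H K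
  exact ⟨SimpleGraph.connectedComponentMk G v, rfl⟩

lemma reachable_mono {G H : SimpleGraph V} (h : G ≤ H) {u v : V} (hr : G.Reachable u v) :
    H.Reachable u v := hr.mono h

/-- Decomposition of reachability after adding one edge. -/
lemma reachable_sup_edge {H : SimpleGraph V} {u v x y : V}
    (h : (H ⊔ edge u v).Reachable x y) :
    H.Reachable x y ∨ (H.Reachable x u ∧ H.Reachable v y) ∨
      (H.Reachable x v ∧ H.Reachable u y) := by
  obtain ⟨w⟩ := h
  induction w with
  | nil => exact Or.inl (SimpleGraph.Reachable.refl _)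
  | @cons a b c hadj p ih =>
    rw [sup_adj] at hadj
    rcases hadj with hH | hE
    · rcases ih with h1 | ⟨h1, h2⟩ | ⟨h1, h2⟩
      · exact Or.inl (hH.reachable.trans h1)
      · exact Or.inr (Or.inl ⟨hH.reachable.trans h1, h2⟩)
      · exact Or.inr (Or.inr ⟨hH.reachable.trans h1, h2⟩)
    · rw [edge_adj] at hE
      rcases hE.1 with ⟨rfl, rfl⟩ | ⟨rfl, rfl⟩
      · rcases ih with h1 | ⟨h1, h2⟩ | ⟨h1, h2⟩
        · exact Or.inr (Or.inl ⟨SimpleGraph.Reachable.refl _, h1⟩)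
        · exact Or.inr (Or.inl ⟨SimpleGraph.Reachable.refl _, h2⟩)
        · exact Or.inl h2
      · rcases ih with h1 | ⟨h1, h2⟩ | ⟨h1, h2⟩
        · exact Or.inr (Or.inr ⟨SimpleGraph.Reachable.refl _, h1⟩)
        · exact Or.inl h2
        · exact Or.inr (Or.inr ⟨SimpleGraph.Reachable.refl _, h2⟩)

/-- If every edge of `X` joins `F`-reachable vertices then reachability in `F ⊔ X` equals `F`. -/
lemma reachable_sup_of_within {F X : SimpleGraph V}
    (hX : ∀ a b, X.Adj a b → F.Reachable a b) {x y : V}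
    (h : (F ⊔ X).Reachable x y) : F.Reachable x y := by
  obtain ⟨w⟩ := h
  induction w with
  | nil => exact SimpleGraph.Reachable.refl _
  | @cons a b c hadj p ih =>
    rcases (sup_adj _ _ _ _).mp hadj with hF | hXadj
    · exact hF.reachable.trans ih
    · exact (hX _ _ hXadj).trans ih

lemma omega_sup_of_within {F X : SimpleGraph V}
    (hX : ∀ a b, X.Adj a b → F.Reachable a b) : omega (F ⊔ X) = omega F := by
  rw [omega_eq, omega_eq]
  refine (Fintype.card_congr ?_).symm
  refine Equiv.ofBijective
    (SimpleGraph.ConnectedComponent.map (SimpleGraph.Hom.ofLE (le_sup_left : F ≤ F ⊔ X))) ⟨?_, ?_⟩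
  · intro K1 K2 hK
    obtain ⟨a, rfl⟩ := cc_surj F K1
    obtain ⟨b, rfl⟩ := cc_surj F K2
    simp only [SimpleGraph.ConnectedComponent.map_mk] at hK
    exact SimpleGraph.ConnectedComponent.sound
      (reachable_sup_of_within hX (SimpleGraph.ConnectedComponent.eq.mp hK))
  · intro K
    obtain ⟨v, rfl⟩ := cc_surj _ K
    exact ⟨SimpleGraph.connectedComponentMk F v, rfl⟩


lemma omega_sup_edge_of_reachable {H : SimpleGraph V} {u v : V}
    (h : H.Reachable u v) : omega (H ⊔ edge u v) = omega H := by
  apply omega_sup_of_within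
  intro a b hab
  rw [edge_adj] at hab
  rcases hab.1 with ⟨rfl, rfl⟩ | ⟨rfl, rfl⟩
  · exact h
  · exact h.symm

lemma omega_sup_edge_self (H : SimpleGraph V) (u : V) : omega (H ⊔ edge u u) = omega H :=
  omega_sup_edge_of_reachable (SimpleGraph.Reachable.refl u)

/-- Adding an edge between two non-reachable vertices decreases `omega` by exactly one. -/
lemma omega_sup_edge_not_reachable {H : SimpleGraph V} {u v : V}
    (hne : u ≠ v) (h : ¬ H.Reachable u v) :
    omega H = omega (H ⊔ edge u v) + 1 := by
  classical
  set H' := H ⊔ edge u v with hH'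
  have hle : H ≤ H' := le_sup_left
  set φ : H.ConnectedComponent → H'.ConnectedComponent :=
    SimpleGraph.ConnectedComponent.map (SimpleGraph.Hom.ofLE hle) with hφ
  have hφmk : ∀ x : V, φ (H.connectedComponentMk x) = H'.connectedComponentMk x := fun x => rfl
  -- the restriction of φ to components other than that of v is a bijection
  have hbij : Function.Bijective
      (fun K : {K : H.ConnectedComponent // K ≠ H.connectedComponentMk v} => φ K.1) := by
    constructor
    · rintro ⟨K1, hK1⟩ ⟨K2, hK2⟩ hK
      obtain ⟨a, rfl⟩ := cc_surj H K1
      obtain ⟨b, rfl⟩ := cc_surj H K2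
      simp only [hφmk] at hK
      have := SimpleGraph.ConnectedComponent.eq.mp hK
      rcases reachable_sup_edge this with h1 | ⟨h1, h2⟩ | ⟨h1, h2⟩
      · exact Subtype.ext (SimpleGraph.ConnectedComponent.sound h1)
      · exact absurd (SimpleGraph.ConnectedComponent.sound h2.symm) hK2
      · exact absurd (SimpleGraph.ConnectedComponent.sound h1) hK1
    · intro K
      obtain ⟨x, rfl⟩ := cc_surj H' K
      by_cases hxv : H.Reachable v x
      · refine ⟨⟨H.connectedComponentMk u, ?_⟩, ?_⟩
        · intro hc
          exact h (SimpleGraph.ConnectedComponent.eq.mp hc)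
        · show φ (H.connectedComponentMk u) = H'.connectedComponentMk x
          rw [hφmk]
          apply SimpleGraph.ConnectedComponent.sound
          have huv : H'.Reachable u v := by
            apply SimpleGraph.Adj.reachable
            rw [hH', sup_adj, edge_adj]
            exact Or.inr ⟨Or.inl ⟨rfl, rfl⟩, hne⟩
          exact huv.trans (reachable_mono hle hxv)
      · refine ⟨⟨H.connectedComponentMk x, ?_⟩, rfl⟩
        intro hc
        exact hxv (SimpleGraph.ConnectedComponent.eq.mp hc).symm
  have hcard : Fintype.card {K : H.ConnectedComponent // K ≠ H.connectedComponentMk v}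
      = Fintype.card H'.ConnectedComponent := Fintype.card_of_bijective hbij
  have hsub : Fintype.card {K : H.ConnectedComponent // K ≠ H.connectedComponentMk v} + 1
      = Fintype.card H.ConnectedComponent := by
    classical
    rw [Fintype.card_subtype_compl (p := fun K => K = H.connectedComponentMk v)]
    · rw [Fintype.card_subtype_eq]
      have : 1 ≤ Fintype.card H.ConnectedComponent := by
        have : Nonempty H.ConnectedComponent := ⟨H.connectedComponentMk v⟩
        exact Fintype.card_pos
      omega
  rw [omega_eq, omega_eq, ← hcard, ← hsub]

lemma acyclic_sup_edge {H : SimpleGraph V} {u v : V} (hac : H.IsAcyclic)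
    (hne : u ≠ v) (h : ¬ H.Reachable u v) : (H ⊔ edge u v).IsAcyclic := by
  set H' := H ⊔ edge u v with hH'
  have hsd : H' \ fromEdgeSet {s(u, v)} ≤ H := by
    intro a b hab
    rw [sdiff_adj, hH', sup_adj] at hab
    rcases hab.1 with h1 | h1
    · exact h1
    · exfalso
      apply hab.2
      rw [fromEdgeSet_adj]
      rw [edge_adj] at h1
      refine ⟨?_, h1.2⟩
      rcases h1.1 with ⟨rfl, rfl⟩ | ⟨rfl, rfl⟩
      · rfl
      · exact Sym2.eq_swap
  have hbridge : H'.IsBridge s(u, v) := by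
    rw [isBridge_iff]
    · intro hr
      exact h (reachable_sup_of_within (F := H) (X := H' \ fromEdgeSet {s(u, v)})
        (fun a b hab => (hsd hab).reachable)
        (hr.mono le_sup_right))
  intro a w hw
  by_cases hmem : s(u, v) ∈ w.edges
  · exact hbridge.notMem_edges_of_isCycle hw hmem
  · have hsub : ∀ e ∈ w.edges, e ∈ H.edgeSet := by
      intro e he
      have := w.edges_subset_edgeSet he
      rw [hH', edgeSet_sup, edge_edgeSet_of_ne hne] at this
      rcases this with h1 | h1
      · exact h1
      · have he2 : e = s(u, v) := by simpa using h1
        exact absurd (he2 ▸ he) hmem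
    exact hac _ (hw.transfer hsub)

section Rank
variable [DecidableEq V]

noncomputable def grk (S : Finset (Sym2 V)) : ℕ :=
  Fintype.card V - omega (fromEdgeSet (↑S : Set (Sym2 V)))

lemma omega_add_grk (S : Finset (Sym2 V)) :
    omega (fromEdgeSet (↑S : Set (Sym2 V))) + grk S = Fintype.card V :=
  Nat.add_sub_cancel' (omega_le_card _)

lemma grk_empty : grk (∅ : Finset (Sym2 V)) = 0 := by
  unfold grk
  rw [Finset.coe_empty, fromEdgeSet_empty, omega_bot, Nat.sub_self]

lemma grk_mono {S T : Finset (Sym2 V)} (h : S ⊆ T) : grk S ≤ grk T :=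
  Nat.sub_le_sub_left (omega_anti (fromEdgeSet_mono (Finset.coe_subset.mpr h))) _

lemma fromEdgeSet_insert_eq (x y : V) (S : Finset (Sym2 V)) :
    fromEdgeSet (↑(insert s(x, y) S) : Set (Sym2 V)) =
      edge x y ⊔ fromEdgeSet (↑S : Set (Sym2 V)) := by
  rw [Finset.coe_insert, Set.insert_eq, fromEdgeSet_union]
  rfl

lemma grk_insert_of_not_reachable {x y : V} {S : Finset (Sym2 V)} (hne : x ≠ y)
    (h : ¬ (fromEdgeSet (↑S : Set (Sym2 V))).Reachable x y) :
    grk (insert s(x, y) S) = grk S + 1 := by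
  have key := omega_sup_edge_not_reachable hne h
  unfold grk
  rw [fromEdgeSet_insert_eq, sup_comm]
  have h2 := omega_le_card (fromEdgeSet (↑S : Set (Sym2 V)))
  have h3 := omega_le_card (fromEdgeSet (↑S : Set (Sym2 V)) ⊔ edge x y)
  omega

lemma grk_insert_le (e : Sym2 V) (S : Finset (Sym2 V)) :
    grk (insert e S) ≤ grk S + 1 := by
  induction e with
  | _ x y =>
    by_cases hne : x = y
    · subst hne
      have : fromEdgeSet (↑(insert s(x, x) S) : Set (Sym2 V)) =
          fromEdgeSet (↑S : Set (Sym2 V)) := by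
        rw [fromEdgeSet_insert_eq]
        have : edge x x = (⊥ : SimpleGraph V) := by
          ext a b
          rw [edge_adj]
          simp only [bot_adj, iff_false]
          rintro ⟨⟨rfl, rfl⟩ | ⟨rfl, rfl⟩, hne⟩ <;> exact hne rfl
        rw [this, bot_sup_eq]
      unfold grk
      rw [this]
      omega
    · by_cases hr : (fromEdgeSet (↑S : Set (Sym2 V))).Reachable x y
      · have : grk (insert s(x, y) S) = grk S := by
          unfold grk
          rw [fromEdgeSet_insert_eq, sup_comm, omega_sup_edge_of_reachable hr]
        omega
      · rw [grk_insert_of_not_reachable hne hr]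

lemma grk_union_le_card_add (S D : Finset (Sym2 V)) :
    grk (S ∪ D) ≤ grk S + D.card := by
  classical
  induction D using Finset.induction_on with
  | empty => simp [grk_mono]
  | @insert e D he ih =>
    have : S ∪ insert e D = insert e (S ∪ D) := by
      ext a; simp [Finset.mem_insert, Finset.mem_union, or_left_comm, or_comm]
    rw [this, Finset.card_insert_of_notMem he]
    calc grk (insert e (S ∪ D)) ≤ grk (S ∪ D) + 1 := grk_insert_le _ _
    _ ≤ grk S + D.card + 1 := by omega

lemma grk_le_card (S : Finset (Sym2 V)) : grk S ≤ S.card := by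
  have := grk_union_le_card_add (∅ : Finset (Sym2 V)) S
  simpa [grk_empty] using this

lemma grk_subset_indep {S F : Finset (Sym2 V)} (h : F ⊆ S) (hind : grk S = S.card) :
    grk F = F.card := by
  have h1 : S = F ∪ (S \ F) := by rw [Finset.union_sdiff_of_subset h]
  have h2 := grk_union_le_card_add F (S \ F)
  rw [← h1, hind, Finset.card_sdiff_of_subset h] at h2
  have h3 := grk_le_card F
  have h4 := Finset.card_le_card h
  omega

lemma exists_cross {S F : Finset (Sym2 V)} (hFS : F ⊆ S) (hlt : grk F < grk S) :
    ∃ x y : V, x ≠ y ∧ s(x, y) ∈ S ∧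
      ¬ (fromEdgeSet (↑F : Set (Sym2 V))).Reachable x y := by
  by_contra hc
  push_neg at hc
  have hwithin : ∀ a b : V, (fromEdgeSet (↑S : Set (Sym2 V))).Adj a b →
      (fromEdgeSet (↑F : Set (Sym2 V))).Reachable a b := by
    intro a b hab
    rw [fromEdgeSet_adj] at hab
    exact hc a b hab.2 hab.1
  have := omega_sup_of_within hwithin
  rw [sup_eq_right.mpr (fromEdgeSet_mono (Finset.coe_subset.mpr hFS))] at this
  unfold grk at hlt
  omega

lemma exists_basis_between (S : Finset (Sym2 V)) :
    ∀ (k : ℕ) (F : Finset (Sym2 V)), grk S - F.card = k → F ⊆ S → grk F = F.card →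
    ∃ B, F ⊆ B ∧ B ⊆ S ∧ grk B = B.card ∧ B.card = grk S := by
  intro k
  induction k with
  | zero =>
    intro F hk hFS hind
    have h1 := grk_mono hFS
    have h2 := grk_le_card F
    exact ⟨F, Finset.Subset.refl _, hFS, hind, by omega⟩
  | succ k ih =>
    intro F hk hFS hind
    have hlt : grk F < grk S := by
      have := grk_le_card F
      omega
    obtain ⟨x, y, hne, hmem, hnr⟩ := exists_cross hFS hlt
    have hnotmem : s(x, y) ∉ F := by
      intro hc
      exact hnr (SimpleGraph.Adj.reachable (by rw [fromEdgeSet_adj]; exact ⟨hc, hne⟩))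
    have hcard : (insert s(x, y) F).card = F.card + 1 := Finset.card_insert_of_notMem hnotmem
    have hind' : grk (insert s(x, y) F) = (insert s(x, y) F).card := by
      rw [grk_insert_of_not_reachable hne hnr, hcard, hind]
    obtain ⟨B, hB1, hB2, hB3, hB4⟩ := ih (insert s(x, y) F) (by omega)
      (Finset.insert_subset hmem hFS) hind'
    exact ⟨B, (Finset.subset_insert _ _).trans hB1, hB2, hB3, hB4⟩

lemma grk_submod (S T : Finset (Sym2 V)) :
    grk (S ∪ T) + grk (S ∩ T) ≤ grk S + grk T := by
  obtain ⟨B0, -, hB0sub, hB0ind, hB0card⟩ :=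
    exists_basis_between (S ∩ T) _ ∅ rfl (Finset.empty_subset _) (by simp [grk_empty])
  obtain ⟨BS, hBS0, hBSsub, hBSind, hBScard⟩ :=
    exists_basis_between S _ B0 rfl (hB0sub.trans (Finset.inter_subset_left)) hB0ind
  obtain ⟨BU, hBUS, hBUsub, hBUind, hBUcard⟩ :=
    exists_basis_between (S ∪ T) _ BS rfl (hBSsub.trans (Finset.subset_union_left)) hBSind
  -- BU ∩ S = BS
  have hBUSeq : BU ∩ S = BS := by
    refine (Finset.eq_of_subset_of_card_le (Finset.subset_inter hBUS hBSsub) ?_).symm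
    have hind2 : grk (BU ∩ S) = (BU ∩ S).card :=
      grk_subset_indep Finset.inter_subset_left hBUind
    have hsub2 : grk (BU ∩ S) ≤ grk S := grk_mono Finset.inter_subset_right
    omega
  have hD : BU \ BS ⊆ T := by
    intro e he
    rw [Finset.mem_sdiff] at he
    rcases Finset.mem_union.mp (hBUsub he.1) with h1 | h1
    · exact absurd (hBUSeq ▸ Finset.mem_inter.mpr ⟨he.1, h1⟩) he.2
    · exact h1
  have hB0D : B0 ∪ (BU \ BS) ⊆ T :=
    Finset.union_subset (hB0sub.trans Finset.inter_subset_right) hD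
  have hBDind : grk (B0 ∪ (BU \ BS)) = (B0 ∪ (BU \ BS)).card :=
    grk_subset_indep (Finset.union_subset (hBS0.trans hBUS) Finset.sdiff_subset) hBUind
  have hdisj : Disjoint B0 (BU \ BS) := by
    rw [Finset.disjoint_left]
    intro e he hsd
    exact (Finset.mem_sdiff.mp hsd).2 (hBS0 he)
  have hcardU : (B0 ∪ (BU \ BS)).card = B0.card + (BU \ BS).card :=
    Finset.card_union_of_disjoint hdisj
  have hcardsd : (BU \ BS).card = BU.card - BS.card := Finset.card_sdiff_of_subset hBUS
  have hle : Finset.card BS ≤ Finset.card BU := Finset.card_le_card hBUS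
  have hgrkT : grk (B0 ∪ (BU \ BS)) ≤ grk T := grk_mono hB0D
  have hmonoSU : grk S ≤ grk (S ∪ T) := grk_mono Finset.subset_union_left
  omega

end Rank

section Rank2
variable [DecidableEq V]

lemma grk_erase_eq {S : Finset (Sym2 V)} {x y : V} (he : s(x, y) ∈ S)
    (hr : (fromEdgeSet (↑(S.erase s(x, y)) : Set (Sym2 V))).Reachable x y) :
    grk S = grk (S.erase s(x, y)) := by
  have h1 : S = insert s(x, y) (S.erase s(x, y)) := (Finset.insert_erase he).symm
  conv_lhs => rw [h1]
  unfold grk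
  rw [fromEdgeSet_insert_eq, sup_comm, omega_sup_edge_of_reachable hr]

lemma isAcyclic_of_indep {S : Finset (Sym2 V)} (hind : grk S = S.card) :
    (fromEdgeSet (↑S : Set (Sym2 V))).IsAcyclic := by
  set F := fromEdgeSet (↑S : Set (Sym2 V)) with hF
  intro a w hw
  have hlen : w.edges ≠ [] := by
    have h3 := hw.three_le_length
    intro hc
    rw [← SimpleGraph.Walk.length_edges, hc] at h3
    simp at h3
  obtain ⟨e, he⟩ := List.exists_mem_of_ne_nil _ hlen
  have heS : e ∈ F.edgeSet := w.edges_subset_edgeSet he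
  rw [hF, edgeSet_fromEdgeSet] at heS
  obtain ⟨heS, hnd⟩ := heS
  induction e with
  | _ x y =>
    have hne : x ≠ y := by
      intro hc
      exact hnd (by simp [hc, Sym2.mk_isDiag_iff])
    have hadj : F.Adj x y := by
      rw [hF, fromEdgeSet_adj]
      exact ⟨heS, hne⟩
    have hnb : ¬ F.IsBridge s(x, y) := by
      intro hb
      exact hb.notMem_edges_of_isCycle hw he
    rw [isBridge_iff] at hnb
    push_neg at hnb
    have hreach : (F \ fromEdgeSet {s(x, y)}).Reachable x y := hnb
    have hgraph : F \ fromEdgeSet {s(x, y)} =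
        fromEdgeSet (↑(S.erase s(x, y)) : Set (Sym2 V)) := by
      ext a b
      rw [sdiff_adj, hF, fromEdgeSet_adj, fromEdgeSet_adj, fromEdgeSet_adj,
        Finset.coe_erase, Set.mem_diff]
      constructor
      · rintro ⟨⟨h1, h2⟩, h3⟩
        refine ⟨⟨h1, fun hc => h3 ⟨hc, h2⟩⟩, h2⟩
      · rintro ⟨⟨h1, h2⟩, h3⟩
        exact ⟨⟨h1, h3⟩, fun hc => h2 hc.1⟩
    rw [hgraph] at hreach
    have := grk_erase_eq heS hreach
    have h2 := grk_le_card (S.erase s(x, y))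
    have h3 := Finset.card_erase_of_mem heS
    have h4 : 0 < S.card := Finset.card_pos.mpr ⟨_, heS⟩
    omega

lemma choose_two_succ (n : ℕ) : (n + 1).choose 2 = n.choose 2 + n := by
  have h := Nat.choose_succ_succ' n 1
  norm_num at h
  omega

/-- Pairwise choose-2 superadditivity. -/
lemma choose_two_add_le : ∀ (p q : ℕ), (p + 1).choose 2 + (q + 1).choose 2 ≤ (p + q + 1).choose 2 := by
  intro p q
  induction q with
  | zero => simp
  | succ q ih =>
    have h1 := choose_two_succ (q + 1)
    have h2 := choose_two_succ (p + q + 1)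
    have h3 : p + (q + 1) + 1 = (p + q + 1) + 1 := by omega
    rw [h3, h2]
    omega

lemma sum_choose_two_le {ι : Type*} [DecidableEq ι] (s : Finset ι) (t : ι → ℕ)
    (ht : ∀ i ∈ s, 1 ≤ t i) :
    ∑ i ∈ s, (t i).choose 2 ≤ ((∑ i ∈ s, (t i - 1)) + 1).choose 2 := by
  induction s using Finset.induction_on with
  | empty => simp
  | @insert i s hi ih =>
    rw [Finset.sum_insert hi, Finset.sum_insert hi]
    have h1 := ih (fun j hj => ht j (Finset.mem_insert_of_mem hj))
    have h2 := choose_two_add_le (t i - 1) (∑ j ∈ s, (t j - 1))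
    have h3 : t i - 1 + 1 = t i := Nat.succ_pred_eq_of_pos (ht i (Finset.mem_insert_self _ _))
    calc (t i).choose 2 + ∑ j ∈ s, (t j).choose 2
        ≤ (t i).choose 2 + ((∑ j ∈ s, (t j - 1)) + 1).choose 2 := by omega
      _ ≤ (t i - 1 + (∑ j ∈ s, (t j - 1)) + 1).choose 2 := by rw [← h3] at *; exact h2
      _ = (t i - 1 + ∑ j ∈ s, (t j - 1) + 1).choose 2 := rfl

end Rank2

section Count
variable [DecidableEq V]

lemma sym2_out_eq (e : Sym2 V) : s(e.out.1, e.out.2) = e := by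
  conv_rhs => rw [← e.out_eq]

lemma card_le_choose_grk {S : Finset (Sym2 V)} (hnd : ∀ e ∈ S, ¬ e.IsDiag) :
    S.card ≤ (grk S + 1).choose 2 := by
  classical
  obtain ⟨B, -, hBS, hBind, hBcard⟩ :=
    exists_basis_between S _ ∅ rfl (Finset.empty_subset _) (by simp [grk_empty])
  set F := fromEdgeSet (↑B : Set (Sym2 V)) with hF
  have hwithin : ∀ x y : V, s(x, y) ∈ S → F.Reachable x y := by
    intro x y hxy
    by_cases hne : x = y
    · subst hne; exact SimpleGraph.Reachable.refl _
    · by_contra hnr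
      have h1 : grk (insert s(x, y) B) = grk B + 1 := grk_insert_of_not_reachable hne hnr
      have h2 : grk (insert s(x, y) B) ≤ grk S := grk_mono (Finset.insert_subset hxy hBS)
      omega
  set comp : V → F.ConnectedComponent := F.connectedComponentMk with hcomp
  set g : Sym2 V → F.ConnectedComponent := fun e => comp e.out.1 with hg
  set t : F.ConnectedComponent → ℕ :=
    fun K => (Finset.univ.filter (fun v => comp v = K)).card with ht
  have hcards : S.card = ∑ K ∈ Finset.univ, (S.filter (fun e => g e = K)).card :=
    Finset.card_eq_sum_card_fiberwise (fun e _ => Finset.mem_univ _)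
  have hcardV : Fintype.card V = ∑ K ∈ Finset.univ, t K := by
    rw [← Finset.card_univ]
    exact Finset.card_eq_sum_card_fiberwise (fun v _ => Finset.mem_univ _)
  have htpos : ∀ K : F.ConnectedComponent, 1 ≤ t K := by
    intro K
    obtain ⟨v, rfl⟩ := cc_surj F K
    have : v ∈ Finset.univ.filter (fun v' => comp v' = F.connectedComponentMk v) := by
      exact Finset.mem_filter.mpr ⟨Finset.mem_univ _, rfl⟩
    exact Finset.card_pos.mpr ⟨v, this⟩
  have hfiber : ∀ K : F.ConnectedComponent,
      (S.filter (fun e => g e = K)).card ≤ (t K).choose 2 := by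
    intro K
    have : (t K).choose 2 = ((Finset.univ.filter (fun v => comp v = K)).powersetCard 2).card := by
      rw [Finset.card_powersetCard]
    rw [this]
    apply Finset.card_le_card_of_injOn (fun e => ({e.out.1, e.out.2} : Finset V))
    · intro e hmem
      rw [Finset.mem_coe, Finset.mem_filter] at hmem
      obtain ⟨heS, hgK⟩ := hmem
      have hne : e.out.1 ≠ e.out.2 := by
        intro hc
        apply hnd e heS
        rw [← sym2_out_eq e, Sym2.mk_isDiag_iff]
        exact hc
      have hreach : F.Reachable e.out.1 e.out.2 := by
        apply hwithin
        rw [sym2_out_eq e]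
        exact heS
      rw [Finset.mem_coe, Finset.mem_powersetCard]
      constructor
      · intro v hv
        rw [Finset.mem_insert, Finset.mem_singleton] at hv
        rcases hv with rfl | rfl
        · simp only [Finset.mem_filter]
          exact ⟨Finset.mem_univ _, hgK⟩
        · simp only [Finset.mem_filter]
          refine ⟨Finset.mem_univ _, ?_⟩
          rw [← hgK]
          exact (SimpleGraph.ConnectedComponent.sound hreach).symm
      · exact Finset.card_pair hne
    · intro e1 h1 e2 h2 heq
      simp only [Finset.coe_filter, Set.mem_setOf_eq] at h1 h2
      have hne1 : e1.out.1 ≠ e1.out.2 := by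
        intro hc
        apply hnd e1 h1.1
        rw [← sym2_out_eq e1, Sym2.mk_isDiag_iff]; exact hc
      have hne2 : e2.out.1 ≠ e2.out.2 := by
        intro hc
        apply hnd e2 h2.1
        rw [← sym2_out_eq e2, Sym2.mk_isDiag_iff]; exact hc
      rw [← sym2_out_eq e1, ← sym2_out_eq e2]
      have heq' : ({e1.out.1, e1.out.2} : Finset V) = {e2.out.1, e2.out.2} := heq
      have h11 : e1.out.1 ∈ ({e2.out.1, e2.out.2} : Finset V) := by
        rw [← heq']; simp
      have h12 : e1.out.2 ∈ ({e2.out.1, e2.out.2} : Finset V) := by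
        rw [← heq']; simp
      rw [Finset.mem_insert, Finset.mem_singleton] at h11 h12
      rcases h11 with ha | ha <;> rcases h12 with hb | hb
      · exact absurd (ha.trans hb.symm) hne1
      · rw [ha, hb]
      · rw [ha, hb, Sym2.eq_swap]
      · exact absurd (ha.trans hb.symm) hne1
  have hsum : ∑ K ∈ Finset.univ, (t K - 1) = grk S := by
    have h1 : ∑ K ∈ Finset.univ, (t K - 1) + Fintype.card F.ConnectedComponent
        = ∑ K ∈ Finset.univ, t K := by
      rw [← Finset.card_univ, Finset.card_eq_sum_ones, ← Finset.sum_add_distrib]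
      exact Finset.sum_congr rfl (fun K _ => by have := htpos K; omega)
    have h2 : omega F + grk B = Fintype.card V := omega_add_grk B
    have h3 : grk B = grk S := by rw [hBind, hBcard]
    rw [omega_eq] at h2
    omega
  calc S.card = ∑ K ∈ Finset.univ, (S.filter (fun e => g e = K)).card := hcards
    _ ≤ ∑ K ∈ Finset.univ, (t K).choose 2 :=
        Finset.sum_le_sum (fun K _ => hfiber K)
    _ ≤ ((∑ K ∈ Finset.univ, (t K - 1)) + 1).choose 2 :=
        sum_choose_two_le _ _ (fun K _ => htpos K)
    _ = (grk S + 1).choose 2 := by rw [hsum]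

end Count

section Rado
variable [DecidableEq V] {ι : Type*} [Fintype ι] [DecidableEq ι]

lemma rado_endgame (d : ℕ) (A : ι → Finset (Sym2 V)) (hone : ∀ i, (A i).card = 1)
    (hcond : ∀ J : Finset ι, J.card ≤ grk (J.biUnion A) + d) :
    ∃ x : ι → Sym2 V, (∀ i, x i ∈ A i) ∧
      Fintype.card ι ≤ grk (Finset.univ.image x) + d := by
  have hx : ∀ i, ∃ a, A i = {a} := fun i => Finset.card_eq_one.mp (hone i)
  choose x hxx using hx
  refine ⟨x, fun i => by rw [hxx i]; exact Finset.mem_singleton_self _, ?_⟩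
  have himg : Finset.univ.image x = Finset.univ.biUnion A := by
    ext e
    simp only [Finset.mem_image, Finset.mem_biUnion]
    constructor
    · rintro ⟨i, hi, rfl⟩
      exact ⟨i, hi, by rw [hxx i]; exact Finset.mem_singleton_self _⟩
    · rintro ⟨i, hi, he⟩
      rw [hxx i, Finset.mem_singleton] at he
      exact ⟨i, hi, he.symm⟩
  rw [himg, ← Finset.card_univ]
  exact hcond Finset.univ

lemma rado (d : ℕ) : ∀ (N : ℕ) (A : ι → Finset (Sym2 V)), (∑ i, (A i).card ≤ N) →
    (∀ i, (A i).Nonempty) →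
    (∀ J : Finset ι, J.card ≤ grk (J.biUnion A) + d) →
    ∃ x : ι → Sym2 V, (∀ i, x i ∈ A i) ∧
      Fintype.card ι ≤ grk (Finset.univ.image x) + d := by
  intro N
  induction N with
  | zero =>
    intro A hsum hne hcond
    by_cases hall : ∀ i, (A i).card = 1
    · exact rado_endgame d A hall hcond
    · push_neg at hall
      obtain ⟨i0, _⟩ := hall
      exfalso
      have h1 : 1 ≤ (A i0).card := Finset.card_pos.mpr (hne i0)
      have h2 : (A i0).card ≤ ∑ i, (A i).card :=
        Finset.single_le_sum (f := fun i => (A i).card) (fun i _ => Nat.zero_le _)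
          (Finset.mem_univ i0)
      omega
  | succ N ih =>
    intro A hsum hne hcond
    by_cases hall : ∀ i, (A i).card = 1
    · exact rado_endgame d A hall hcond
    · push_neg at hall
      obtain ⟨j0, hj0⟩ := hall
      have h2le : 2 ≤ (A j0).card := by
        have := Finset.card_pos.mpr (hne j0)
        omega
      have h1lt : 1 < (A j0).card := by omega
      obtain ⟨x1, hx1, x2, hx2, hx12⟩ := Finset.one_lt_card.mp h1lt
      -- helper facts for an update
      have hupdate_facts : ∀ y ∈ A j0,
          (∑ i, ((Function.update A j0 ((A j0).erase y)) i).card ≤ N) ∧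
          (∀ i, ((Function.update A j0 ((A j0).erase y)) i).Nonempty) := by
        intro y hy
        constructor
        · have hs : ∑ i, ((Function.update A j0 ((A j0).erase y)) i).card
              = ∑ i, (A i).card - 1 := by
            have e1 := Finset.sum_eq_sum_sdiff_singleton_add (Finset.mem_univ j0)
              (fun i => ((Function.update A j0 ((A j0).erase y)) i).card)
            have e2 := Finset.sum_eq_sum_sdiff_singleton_add (Finset.mem_univ j0)
              (fun i => (A i).card)
            have e3 : ∑ i ∈ Finset.univ \ {j0},
                ((Function.update A j0 ((A j0).erase y)) i).card
                = ∑ i ∈ Finset.univ \ {j0}, (A i).card := by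
              apply Finset.sum_congr rfl
              intro i hi
              have hij : i ≠ j0 := by
                have := (Finset.mem_sdiff.mp hi).2
                simpa using this
              rw [Function.update_of_ne hij]
            simp only [Function.update_self] at e1
            rw [Finset.card_erase_of_mem hy] at e1
            have h2 : (A j0).card ≤ ∑ i, (A i).card :=
              Finset.single_le_sum (f := fun i => (A i).card) (fun i _ => Nat.zero_le _)
                (Finset.mem_univ j0)
            omega
          omega
        · intro i
          by_cases hi : i = j0
          · subst hi
            rw [Function.update_self]
            rw [← Finset.card_pos, Finset.card_erase_of_mem hy]
            omega
          · rw [Function.update_of_ne hi]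
            exact hne i
      -- the two candidate updated families
      by_cases hc1 : ∀ J : Finset ι, J.card ≤
          grk (J.biUnion (Function.update A j0 ((A j0).erase x1))) + d
      · obtain ⟨x, hx, hcard⟩ := ih _ (hupdate_facts x1 hx1).1 (hupdate_facts x1 hx1).2 hc1
        refine ⟨x, fun i => ?_, hcard⟩
        have := hx i
        by_cases hi : i = j0
        · subst hi
          rw [Function.update_self] at this
          exact Finset.erase_subset _ _ this
        · rwa [Function.update_of_ne hi] at this
      by_cases hc2 : ∀ J : Finset ι, J.card ≤
          grk (J.biUnion (Function.update A j0 ((A j0).erase x2))) + d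
      · obtain ⟨x, hx, hcard⟩ := ih _ (hupdate_facts x2 hx2).1 (hupdate_facts x2 hx2).2 hc2
        refine ⟨x, fun i => ?_, hcard⟩
        have := hx i
        by_cases hi : i = j0
        · subst hi
          rw [Function.update_self] at this
          exact Finset.erase_subset _ _ this
        · rwa [Function.update_of_ne hi] at this
      -- both fail: contradiction via submodularity
      exfalso
      push_neg at hc1 hc2
      obtain ⟨J1, hJ1⟩ := hc1
      obtain ⟨J2, hJ2⟩ := hc2
      -- biUnion over updated family
      have hbi : ∀ (y : Sym2 V) (J : Finset ι), j0 ∈ J →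
          J.biUnion (Function.update A j0 ((A j0).erase y))
            = (J.erase j0).biUnion A ∪ (A j0).erase y := by
        intro y J hj
        ext e
        simp only [Finset.mem_biUnion, Finset.mem_union, Finset.mem_erase]
        constructor
        · rintro ⟨i, hi, he⟩
          by_cases hij : i = j0
          · subst hij
            rw [Function.update_self, Finset.mem_erase] at he
            exact Or.inr he
          · rw [Function.update_of_ne hij] at he
            exact Or.inl ⟨i, ⟨hij, hi⟩, he⟩
        · rintro (⟨i, ⟨hij, hi⟩, he⟩ | he)
          · exact ⟨i, hi, by rwa [Function.update_of_ne hij]⟩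
          · exact ⟨j0, hj, by rwa [Function.update_self, Finset.mem_erase]⟩
      have hj0J1 : j0 ∈ J1 := by
        by_contra hj
        have : J1.biUnion (Function.update A j0 ((A j0).erase x1)) = J1.biUnion A := by
          apply Finset.biUnion_congr rfl
          intro i hi
          rw [Function.update_of_ne (fun hc => hj (by rwa [← hc]))]
        rw [this] at hJ1
        exact absurd (hcond J1) (by omega)
      have hj0J2 : j0 ∈ J2 := by
        by_contra hj
        have : J2.biUnion (Function.update A j0 ((A j0).erase x2)) = J2.biUnion A := by
          apply Finset.biUnion_congr rfl
          intro i hi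
          rw [Function.update_of_ne (fun hc => hj (by rwa [← hc]))]
        rw [this] at hJ2
        exact absurd (hcond J2) (by omega)
      rw [hbi x1 J1 hj0J1] at hJ1
      rw [hbi x2 J2 hj0J2] at hJ2
      set K1 := J1.erase j0 with hK1
      set K2 := J2.erase j0 with hK2
      set X := K1.biUnion A ∪ (A j0).erase x1 with hX
      set Y := K2.biUnion A ∪ (A j0).erase x2 with hY
      have hcardJ1 : J1.card = K1.card + 1 := by
        rw [hK1, Finset.card_erase_of_mem hj0J1]
        have := Finset.card_pos.mpr ⟨j0, hj0J1⟩
        omega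
      have hcardJ2 : J2.card = K2.card + 1 := by
        rw [hK2, Finset.card_erase_of_mem hj0J2]
        have := Finset.card_pos.mpr ⟨j0, hj0J2⟩
        omega
      -- big union contains
      have hbig : (insert j0 (K1 ∪ K2)).biUnion A ⊆ X ∪ Y := by
        intro e he
        rw [Finset.mem_biUnion] at he
        obtain ⟨i, hi, he⟩ := he
        rw [Finset.mem_insert] at hi
        rcases hi with rfl | hi
        · by_cases hex : e = x1
          · rw [Finset.mem_union, hY]
            refine Or.inr (Finset.mem_union_right _ (Finset.mem_erase.mpr ⟨?_, he⟩))
            rw [hex]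
            exact hx12
          · rw [Finset.mem_union, hX]
            exact Or.inl (Finset.mem_union_right _ (Finset.mem_erase.mpr ⟨hex, he⟩))
        · rcases Finset.mem_union.mp hi with hi | hi
          · exact Finset.mem_union_left _ (Finset.mem_union_left _
              (Finset.mem_biUnion.mpr ⟨i, hi, he⟩))
          · exact Finset.mem_union_right _ (Finset.mem_union_left _
              (Finset.mem_biUnion.mpr ⟨i, hi, he⟩))
      have hsmall : (K1 ∩ K2).biUnion A ⊆ X ∩ Y := by
        intro e he
        rw [Finset.mem_biUnion] at he
        obtain ⟨i, hi, he⟩ := he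
        rw [Finset.mem_inter] at hi ⊢
        constructor
        · exact Finset.mem_union_left _ (Finset.mem_biUnion.mpr ⟨i, hi.1, he⟩)
        · exact Finset.mem_union_left _ (Finset.mem_biUnion.mpr ⟨i, hi.2, he⟩)
      have hsub := grk_submod X Y
      have hm1 : grk ((insert j0 (K1 ∪ K2)).biUnion A) ≤ grk (X ∪ Y) := grk_mono hbig
      have hm2 : grk ((K1 ∩ K2).biUnion A) ≤ grk (X ∩ Y) := grk_mono hsmall
      have hcondbig := hcond (insert j0 (K1 ∪ K2))
      have hcondsmall := hcond (K1 ∩ K2)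
      have hj0notin : j0 ∉ K1 ∪ K2 := by
        rw [Finset.mem_union, hK1, hK2]
        rintro (h | h) <;> exact absurd (Finset.mem_erase.mp h).1 (by simp)
      have hcardbig : (insert j0 (K1 ∪ K2)).card = (K1 ∪ K2).card + 1 :=
        Finset.card_insert_of_notMem hj0notin
      have hunioninter : (K1 ∪ K2).card + (K1 ∩ K2).card = K1.card + K2.card :=
        Finset.card_union_add_card_inter _ _
      omega
end Rado

section Final
variable [DecidableEq V] {C : Type*} [DecidableEq C]

lemma colorCount_eq (H : SimpleGraph V) [Fintype H.edgeSet] (color : Sym2 V → C) (c : C) :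
    colorCount H color c = (H.edgeFinset.filter (fun e => color e = c)).card := by
  unfold colorCount
  have he : ∀ e : Sym2 V, (e ∈ H.edgeSet ∧ color e = c) ↔
      e ∈ H.edgeFinset.filter (fun e => color e = c) := by
    intro e
    rw [Finset.mem_filter, SimpleGraph.mem_edgeFinset]
  rw [Nat.card_congr (Equiv.subtypeEquivRight he), Nat.card_eq_fintype_card,
    Fintype.card_coe]

lemma natcard_edgeSet (H : SimpleGraph V) [Fintype H.edgeSet] :
    Nat.card H.edgeSet = H.edgeFinset.card := by
  rw [Nat.card_eq_fintype_card]
  exact (SimpleGraph.edgeFinset_card (G := H)).symm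
end Final
end Aux
end AuxSection

theorem stmt6 {V C : Type*} [Fintype V] (G : SimpleGraph V) (color : Sym2 V → C)
    (f g : C → ℕ) (n m : ℕ) (hn : Fintype.card V = n)
    (hm1 : 1 ≤ m) (hm2 : m ≤ n - 1)
    (hg : IsChromatic G color g)
    (hE : Nat.card G.edgeSet > (n - m).choose 2)
    (hfg : ∀ c, (g c : ℚ) ≤ (Nat.card G.edgeSet : ℚ) / ((n : ℚ) - m) * f c) :
    ∃ F : SimpleGraph V, F ≤ G ∧ F.IsAcyclic ∧ omega F = m ∧
      IsChromatic F color f := by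
  classical
  subst hn
  set n := Fintype.card V with hnn
  set k := n - m with hk
  have hn1 : 1 ≤ n := by omega
  have hmn : m < n := by omega
  have hk1 : 1 ≤ k := by omega
  set E := G.edgeFinset with hEdef
  have hEcard : Nat.card G.edgeSet = E.card := Aux.natcard_edgeSet G
  rw [hEcard] at hE hfg
  have hnd : ∀ e ∈ E, ¬ e.IsDiag := fun e he =>
    SimpleGraph.not_isDiag_of_mem_edgeFinset he
  have hcc : ∀ (H : SimpleGraph V) [Fintype H.edgeSet] (c : C),
      colorCount H color c = (H.edgeFinset.filter (fun e => color e = c)).card :=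
    fun H _ c => Aux.colorCount_eq H color c
  -- numeric abbreviations
  set kq : ℚ := (k : ℚ) with hkqdef
  have hkq : kq = (n : ℚ) - (m : ℚ) := by
    rw [hkqdef, hk]
    exact_mod_cast Nat.cast_sub (le_of_lt hmn)
  have hkq0 : (0 : ℚ) < kq := by
    rw [hkqdef]
    exact_mod_cast hk1
  have hEgt : kq * (kq - 1) / 2 < (E.card : ℚ) := by
    have h1 : ((k.choose 2 : ℕ) : ℚ) < (E.card : ℚ) := by exact_mod_cast hE
    rwa [Nat.cast_choose_two] at h1
  -- THE RANK CRITERION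
  have hcrit : ∀ R : Finset C,
      k ≤ Aux.grk (E.filter (fun e => color e ∉ R)) + ∑ c ∈ R, f c := by
    intro R
    by_cases hks : k ≤ ∑ c ∈ R, f c
    · omega
    push_neg at hks
    set s := ∑ c ∈ R, f c with hsdef
    set D := E.filter (fun e => color e ∉ R) with hD
    by_contra hcon
    push_neg at hcon
    have hDcard : D.card ≤ (k - s).choose 2 := by
      calc D.card ≤ (Aux.grk D + 1).choose 2 :=
            Aux.card_le_choose_grk (fun e he => hnd e (Finset.filter_subset _ _ he))
        _ ≤ (k - s).choose 2 := Nat.choose_le_choose 2 (by omega)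
    have hsplit : (E.filter (fun e => color e ∈ R)).card + D.card = E.card := by
      rw [hD]
      exact Finset.card_filter_add_card_filter_not _
    have hremcard : (E.filter (fun e => color e ∈ R)).card
        ≤ ∑ c ∈ R, colorCount G color c := by
      rw [Finset.card_eq_sum_card_fiberwise
        (f := color) (s := E.filter (fun e => color e ∈ R)) (t := R) (fun e he => (Finset.mem_filter.mp he).2)]
      apply Finset.sum_le_sum
      intro c _
      rw [hcc G c]
      exact Finset.card_le_card (Finset.filter_subset_filter _ (Finset.filter_subset _ _))
    have hsum_bound : ((E.filter (fun e => color e ∈ R)).card : ℚ)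
        ≤ (E.card : ℚ) / kq * (s : ℚ) := by
      have step1 : ((E.filter (fun e => color e ∈ R)).card : ℚ)
          ≤ ∑ c ∈ R, (colorCount G color c : ℚ) := by
        exact_mod_cast hremcard
      have step2 : ∑ c ∈ R, (colorCount G color c : ℚ)
          ≤ ∑ c ∈ R, (E.card : ℚ) / kq * (f c : ℚ) := by
        apply Finset.sum_le_sum
        intro c _
        have h1 : (colorCount G color c : ℚ) ≤ (g c : ℚ) := by exact_mod_cast hg c
        have h2 := hfg c
        rw [hkq]
        exact h1.trans h2
      have step3 : ∑ c ∈ R, (E.card : ℚ) / kq * (f c : ℚ)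
          = (E.card : ℚ) / kq * (s : ℚ) := by
        rw [← Finset.mul_sum, hsdef]
        push_cast
        ring
      linarith
    have htotal : (E.card : ℚ) ≤ (E.card : ℚ) / kq * (s : ℚ) + ((k - s).choose 2 : ℚ) := by
      have h1 : ((E.filter (fun e => color e ∈ R)).card : ℚ) + (D.card : ℚ) = (E.card : ℚ) := by
        exact_mod_cast hsplit
      have h2 : (D.card : ℚ) ≤ ((k - s).choose 2 : ℚ) := by exact_mod_cast hDcard
      linarith
    set aq : ℚ := ((k - s : ℕ) : ℚ) with haqdef
    have haq : aq = kq - (s : ℚ) := by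
      rw [haqdef, hkqdef]
      exact_mod_cast Nat.cast_sub (le_of_lt hks)
    have haq1 : (1 : ℚ) ≤ aq := by
      rw [haqdef]
      exact_mod_cast (by omega : 1 ≤ k - s)
    have hsq0 : (0 : ℚ) ≤ (s : ℚ) := by positivity
    have hch : (((k - s).choose 2 : ℕ) : ℚ) = aq * (aq - 1) / 2 := by
      rw [haqdef]
      exact_mod_cast Nat.cast_choose_two ℚ (k - s)
    rw [hch] at htotal
    have key : (E.card : ℚ) / kq * (s : ℚ) * kq = (E.card : ℚ) * (s : ℚ) := by
      field_simp
    have h2 : (E.card : ℚ) * kq ≤ (E.card : ℚ) * (s : ℚ) + aq * (aq - 1) / 2 * kq := by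
      calc (E.card : ℚ) * kq
          ≤ ((E.card : ℚ) / kq * (s : ℚ) + aq * (aq - 1) / 2) * kq :=
            mul_le_mul_of_nonneg_right htotal (le_of_lt hkq0)
        _ = (E.card : ℚ) / kq * (s : ℚ) * kq + aq * (aq - 1) / 2 * kq := add_mul _ _ _
        _ = (E.card : ℚ) * (s : ℚ) + aq * (aq - 1) / 2 * kq := by rw [key]
    have h3 : (E.card : ℚ) * aq ≤ aq * (aq - 1) / 2 * kq := by
      have hexp : (E.card : ℚ) * aq = (E.card : ℚ) * kq - (E.card : ℚ) * (s : ℚ) := by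
        rw [haq]; ring
      linarith
    have h4 : (E.card : ℚ) ≤ (aq - 1) * kq / 2 := by
      have hrw : aq * (aq - 1) / 2 * kq = ((aq - 1) * kq / 2) * aq := by ring
      rw [hrw] at h3
      have haq0 : (0 : ℚ) < aq := by linarith
      exact le_of_mul_le_mul_right h3 haq0
    have h5 : aq ≤ kq := by linarith
    nlinarith [h4, h5, hEgt, hkq0]
  -- SET UP THE RADO FAMILY
  set C0 : Finset C := E.image color with hC0
  have hcol_mem : ∀ e ∈ E, color e ∈ C0 := fun e he => Finset.mem_image_of_mem color he
  set A : ((c : {c // c ∈ C0}) × Fin (f c.1)) → Finset (Sym2 V) :=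
    fun i => E.filter (fun e => color e = i.1.1) with hA
  have hAne : ∀ i, (A i).Nonempty := by
    intro i
    obtain ⟨e, he, hce⟩ := Finset.mem_image.mp i.1.2
    refine ⟨e, ?_⟩
    simp only [hA, Finset.mem_filter]
    exact ⟨he, hce⟩
  have hcardι : Fintype.card ((c : {c // c ∈ C0}) × Fin (f c.1)) = ∑ c ∈ C0, f c := by
    rw [Fintype.card_sigma]
    simp only [Fintype.card_fin]
    exact Finset.sum_coe_sort C0 f
  have hkN : k ≤ ∑ c ∈ C0, f c := by
    have h1 := hcrit C0
    have h2 : E.filter (fun e => color e ∉ C0) = ∅ := by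
      rw [Finset.filter_eq_empty_iff]
      intro e he hc
      exact hc (hcol_mem e he)
    rw [h2, Aux.grk_empty] at h1
    omega
  set d := Fintype.card ((c : {c // c ∈ C0}) × Fin (f c.1)) - k with hd
  -- Rado condition
  have hradocond : ∀ J : Finset ((c : {c // c ∈ C0}) × Fin (f c.1)),
      J.card ≤ Aux.grk (J.biUnion A) + d := by
    intro J
    set S := J.image (fun i => i.1.1) with hS
    have hSsub : S ⊆ C0 := by
      intro c hc
      obtain ⟨i, _, rfl⟩ := Finset.mem_image.mp hc
      exact i.1.2
    have hJcard : J.card ≤ ∑ c ∈ S, f c := by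
      rw [Finset.card_eq_sum_card_fiberwise
        (f := fun i : ((c : {c // c ∈ C0}) × Fin (f c.1)) => i.1.1) (t := S)
        (fun i hi => Finset.mem_image_of_mem _ hi)]
      apply Finset.sum_le_sum
      intro c _
      have : (J.filter (fun i : ((c : {c // c ∈ C0}) × Fin (f c.1)) => i.1.1 = c)).card
          ≤ (Finset.range (f c)).card := by
        apply Finset.card_le_card_of_injOn (fun i => (i.2 : ℕ))
        · intro i hi
          rw [Finset.mem_coe, Finset.mem_filter] at hi
          rw [Finset.mem_coe, Finset.mem_range]
          have h2 := i.2.isLt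
          exact lt_of_lt_of_le h2 (le_of_eq (congrArg f hi.2))
        · rintro ⟨⟨c1, hc1⟩, p1⟩ h1 ⟨⟨c2, hc2⟩, p2⟩ h2 hp
          simp only [Finset.coe_filter, Set.mem_setOf_eq] at h1 h2
          obtain ⟨-, hc1'⟩ := h1
          obtain ⟨-, hc2'⟩ := h2
          simp only at hc1' hc2' hp
          subst hc1'
          subst hc2'
          congr 1
          exact Fin.ext hp
      rw [Finset.card_range] at this
      exact this
    have hU : J.biUnion A = E.filter (fun e => color e ∈ S) := by
      ext e
      rw [Finset.mem_biUnion, Finset.mem_filter]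
      constructor
      · rintro ⟨i, hi, he⟩
        simp only [hA, Finset.mem_filter] at he
        exact ⟨he.1, he.2 ▸ Finset.mem_image_of_mem _ hi⟩
      · rintro ⟨he, hc⟩
        obtain ⟨i, hi, hce⟩ := Finset.mem_image.mp hc
        refine ⟨i, hi, ?_⟩
        simp only [hA, Finset.mem_filter]
        exact ⟨he, hce.symm⟩
    have hfilter_eq : E.filter (fun e => color e ∉ (C0 \ S)) = E.filter (fun e => color e ∈ S) := by
      apply Finset.filter_congr
      intro e he
      simp only [Finset.mem_sdiff, not_and, not_not, eq_iff_iff]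
      constructor
      · intro h; exact h (hcol_mem e he)
      · intro h _; exact h
    have hcr := hcrit (C0 \ S)
    rw [hfilter_eq] at hcr
    have hsdiff : ∑ c ∈ C0 \ S, f c + ∑ c ∈ S, f c = ∑ c ∈ C0, f c :=
      Finset.sum_sdiff hSsub
    have hSle : ∑ c ∈ S, f c ≤ ∑ c ∈ C0, f c :=
      Finset.sum_le_sum_of_subset hSsub
    rw [← hU] at hcr
    omega
  -- APPLY RADO
  obtain ⟨x, hxA, hxcard⟩ := Aux.rado d (∑ i, (A i).card) A le_rfl hAne hradocond
  set X := Finset.univ.image x with hX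
  have hkX : k ≤ Aux.grk X := by
    rw [hcardι] at hxcard
    omega
  have hXE : X ⊆ E := by
    intro e he
    obtain ⟨i, _, rfl⟩ := Finset.mem_image.mp he
    have hxAi := hxA i
    simp only [hA, Finset.mem_filter] at hxAi
    exact hxAi.1
  -- EXTRACT THE FOREST
  obtain ⟨B, -, hBX, hBind, hBcard⟩ :=
    Aux.exists_basis_between X _ ∅ rfl (Finset.empty_subset _) (by simp [Aux.grk_empty])
  have hkB : k ≤ B.card := by omega
  obtain ⟨S0, hS0B, hS0card⟩ := Finset.exists_subset_card_eq hkB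
  have hS0ind : Aux.grk S0 = S0.card := Aux.grk_subset_indep hS0B hBind
  have hS0X : S0 ⊆ X := hS0B.trans hBX
  have hS0E : S0 ⊆ E := hS0X.trans hXE
  refine ⟨fromEdgeSet (↑S0 : Set (Sym2 V)), ?_, Aux.isAcyclic_of_indep hS0ind, ?_, ?_⟩
  · intro a b hab
    rw [fromEdgeSet_adj] at hab
    exact G.mem_edgeSet.mp (SimpleGraph.mem_edgeFinset.mp (hS0E hab.1))
  · -- omega = m
    have h1 := Aux.omega_add_grk S0
    rw [hS0ind, hS0card] at h1
    unfold k at h1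
    omega
  · -- chromatic
    intro c
    have hedge : (fromEdgeSet (↑S0 : Set (Sym2 V))).edgeFinset = S0 := by
      ext e
      rw [SimpleGraph.mem_edgeFinset, edgeSet_fromEdgeSet, Set.mem_diff]
      constructor
      · rintro ⟨h1, -⟩; exact h1
      · intro h1
        exact ⟨h1, fun hdiag => hnd e (hS0E h1) hdiag⟩
    rw [hcc _ c, hedge]
    by_cases hcC0 : c ∈ C0
    · have hsubim : S0.filter (fun e => color e = c)
          ⊆ Finset.univ.image (fun p : Fin (f c) => x ⟨⟨c, hcC0⟩, p⟩) := by
        intro e he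
        rw [Finset.mem_filter] at he
        obtain ⟨heS0, hec⟩ := he
        obtain ⟨i, -, rfl⟩ := Finset.mem_image.mp (hS0X heS0)
        have hcol : color (x i) = i.1.1 := by
          have hxAi := hxA i
          simp only [hA, Finset.mem_filter] at hxAi
          exact hxAi.2
        obtain ⟨⟨c', hc'⟩, p⟩ := i
        simp only at hcol
        rw [hcol] at hec
        subst hec
        apply Finset.mem_image_of_mem
        exact Finset.mem_univ p
      calc (S0.filter (fun e => color e = c)).card
          ≤ (Finset.univ.image (fun p : Fin (f c) => x ⟨⟨c, hcC0⟩, p⟩)).card :=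
            Finset.card_le_card hsubim
        _ ≤ (Finset.univ : Finset (Fin (f c))).card := Finset.card_image_le
        _ = f c := by rw [Finset.card_univ, Fintype.card_fin]
    · have : S0.filter (fun e => color e = c) = ∅ := by
        rw [Finset.filter_eq_empty_iff]
        intro e he hc
        exact hcC0 (hc ▸ hcol_mem e (hS0E he))
      rw [this]
      simp
end

section
/- An edge-colored complete graph K_n (n >= 2) has a heterochromatic spanning tree if every color appears on at most n/2 edges. -/
open SimpleGraph Finset

set_option linter.unusedSectionVars false
set_option linter.unusedVariables false
set_option maxHeartbeats 1000000

namespace HetAux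


variable {V : Type*} [Fintype V] [DecidableEq V] [DecidableEq (Sym2 V)]

/-- Graph from a finite edge set. -/
def gr (E : Finset (Sym2 V)) : SimpleGraph V := SimpleGraph.fromEdgeSet ↑E

lemma gr_adj {E : Finset (Sym2 V)} {x y : V} :
    (gr E).Adj x y ↔ s(x, y) ∈ E ∧ x ≠ y := by
  simp [gr, fromEdgeSet_adj]

lemma gr_mono {E F : Finset (Sym2 V)} (h : E ⊆ F) : gr E ≤ gr F := by
  intro x y hxy
  rw [gr_adj] at hxy ⊢
  exact ⟨h hxy.1, hxy.2⟩

lemma reach_mono {E F : Finset (Sym2 V)} (h : E ⊆ F) {x y : V}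
    (hr : (gr E).Reachable x y) : (gr F).Reachable x y :=
  hr.mono (gr_mono h)

lemma reach_of_mem {E : Finset (Sym2 V)} {x y : V} (hx : s(x,y) ∈ E) (hne : x ≠ y) :
    (gr E).Reachable x y := (gr_adj.mpr ⟨hx, hne⟩).reachable

lemma gr_insert {E : Finset (Sym2 V)} {e : Sym2 V} :
    gr (insert e E) = gr E ⊔ fromEdgeSet {e} := by
  ext x y
  simp only [gr, fromEdgeSet_adj, coe_insert, Set.mem_insert_iff, mem_coe, sup_adj,
    Set.mem_singleton_iff]
  tauto

lemma gr_erase {E : Finset (Sym2 V)} {f : Sym2 V} :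
    gr (E.erase f) = gr E \ fromEdgeSet {f} := by
  ext x y
  simp only [gr, fromEdgeSet_adj, coe_erase, Set.mem_diff, mem_coe, sdiff_adj,
    Set.mem_singleton_iff]
  tauto

/-- Walk splitting across an inserted edge. -/
lemma reach_split {E : Finset (Sym2 V)} {u v a b : V}
    (h : (gr (insert s(u,v) E)).Reachable a b) :
    (gr E).Reachable a b ∨ ((gr E).Reachable a u ∧ (gr E).Reachable v b) ∨
      ((gr E).Reachable a v ∧ (gr E).Reachable u b) := by
  obtain ⟨w⟩ := h
  induction w with
  | nil => exact Or.inl (Reachable.refl _)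
  | cons hadj w ih =>
    rename_i x y z
    rw [gr_insert, sup_adj, fromEdgeSet_adj, Set.mem_singleton_iff] at hadj
    rcases hadj with hxy | ⟨hee, hne⟩
    · have h1 : (gr E).Reachable x y := hxy.reachable
      rcases ih with h2 | ⟨h2, h3⟩ | ⟨h2, h3⟩
      · exact Or.inl (h1.trans h2)
      · exact Or.inr (Or.inl ⟨h1.trans h2, h3⟩)
      · exact Or.inr (Or.inr ⟨h1.trans h2, h3⟩)
    · rw [Sym2.eq_iff] at hee
      rcases hee with ⟨rfl, rfl⟩ | ⟨rfl, rfl⟩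
      · rcases ih with h2 | ⟨h2, h3⟩ | ⟨h2, h3⟩
        · exact Or.inr (Or.inl ⟨Reachable.refl _, h2⟩)
        · exact Or.inl (h2.symm.trans h3)
        · exact Or.inl h3
      · rcases ih with h2 | ⟨h2, h3⟩ | ⟨h2, h3⟩
        · exact Or.inr (Or.inr ⟨Reachable.refl _, h2⟩)
        · exact Or.inl h3
        · exact Or.inl (h2.symm.trans h3)

lemma acyclic_mono {E F : Finset (Sym2 V)} (h : E ⊆ F) (hac : (gr F).IsAcyclic) :
    (gr E).IsAcyclic := by
  intro v c hc
  exact hac (c.mapLe (gr_mono h)) (hc.mapLe _)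

lemma edge_mem_of_walk {E : Finset (Sym2 V)} {x y : V} {p : (gr E).Walk x y} {e : Sym2 V}
    (he : e ∈ p.edges) : e ∈ E ∧ ¬ e.IsDiag := by
  have h1 := p.edges_subset_edgeSet he
  rw [gr, edgeSet_fromEdgeSet] at h1
  exact ⟨h1.1, h1.2⟩

lemma forest_bridge {E : Finset (Sym2 V)} (hac : (gr E).IsAcyclic) {a b : V}
    (hmem : s(a,b) ∈ E) (hne : a ≠ b) : ¬ (gr (E.erase s(a,b))).Reachable a b := by
  have he : s(a,b) ∈ (gr E).edgeSet := gr_adj.mpr ⟨hmem, hne⟩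
  have hb := (isAcyclic_iff_forall_edge_isBridge.mp hac) he
  rw [isBridge_iff] at hb
  rw [gr_erase]
  exact hb

lemma reach_erase_of_avoid {E : Finset (Sym2 V)} {x y : V} (p : (gr E).Walk x y)
    {f : Sym2 V} (hf : f ∉ p.edges) : (gr (E.erase f)).Reachable x y := by
  refine ⟨p.transfer _ fun e he => ?_⟩
  obtain ⟨h1, h2⟩ := edge_mem_of_walk he
  rw [gr, edgeSet_fromEdgeSet]
  exact ⟨Finset.mem_coe.mpr (Finset.mem_erase.mpr ⟨fun hef => hf (hef ▸ he), h1⟩), h2⟩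

lemma not_reach_erase_of_mem_path {E : Finset (Sym2 V)} (hac : (gr E).IsAcyclic)
    {x y : V} (p : (gr E).Walk x y) (hp : p.IsPath) {f : Sym2 V} (hf : f ∈ p.edges) :
    ¬ (gr (E.erase f)).Reachable x y := by
  intro hr
  obtain ⟨w⟩ := hr
  set q := w.toPath with hq
  have hle : gr (E.erase f) ≤ gr E := gr_mono (Finset.erase_subset _ _)
  have hup : ((q : (gr (E.erase f)).Walk x y).mapLe hle).IsPath := (q.2).mapLe _
  have hequ : (⟨_, hup⟩ : (gr E).Path x y) = ⟨p, hp⟩ := hac.path_unique _ _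
  have hedges : f ∈ ((q : (gr (E.erase f)).Walk x y).mapLe hle).edges := by
    have := congrArg (fun (r : (gr E).Path x y) => (r : (gr E).Walk x y).edges) hequ
    simp only at this
    rw [this]; exact hf
  rw [Walk.mapLe, Walk.edges_map] at hedges
  simp only [Hom.ofLE_apply, Sym2.map_id', List.mem_map, id] at hedges
  obtain ⟨e, he, rfl⟩ := hedges
  have := (edge_mem_of_walk he).1
  simp at this

lemma exists_cut {E D : Finset (Sym2 V)} (hac : (gr E).IsAcyclic) {x y : V}
    (hr : (gr E).Reachable x y) (hnr : ¬ (gr (E \ D)).Reachable x y) :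
    ∃ f ∈ D, f ∈ E ∧ ¬ (gr (E.erase f)).Reachable x y := by
  obtain ⟨w⟩ := hr
  set p := w.toPath with hpdef
  by_cases hall : ∀ e ∈ (p : (gr E).Walk x y).edges, e ∉ D
  · exfalso
    refine hnr ⟨(p : (gr E).Walk x y).transfer _ fun e he => ?_⟩
    obtain ⟨h1, h2⟩ := edge_mem_of_walk he
    rw [gr, edgeSet_fromEdgeSet]
    exact ⟨Finset.mem_coe.mpr (Finset.mem_sdiff.mpr ⟨h1, hall e he⟩), h2⟩
  · push_neg at hall
    obtain ⟨f, hfp, hfD⟩ := hall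
    exact ⟨f, hfD, (edge_mem_of_walk hfp).1,
      not_reach_erase_of_mem_path hac (p : (gr E).Walk x y) p.2 hfp⟩

lemma addcross {E : Finset (Sym2 V)} {u v : V} (hac : (gr E).IsAcyclic)
    (hnr : ¬(gr E).Reachable u v) (hne : u ≠ v) :
    (gr (insert s(u,v) E)).IsAcyclic := by
  have huvE : s(u,v) ∉ E := fun hmem => hnr (reach_of_mem hmem hne)
  rw [isAcyclic_iff_forall_edge_isBridge]
  intro e he
  revert he
  induction e using Sym2.ind with
  | _ a b =>
  intro he
  have hadj : (gr (insert s(u,v) E)).Adj a b := he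
  have hab : a ≠ b := hadj.ne
  rw [isBridge_iff]
  change ¬ (gr (insert s(u,v) E) \ fromEdgeSet {s(a,b)}).Reachable a b
  rw [← gr_erase]
  by_cases hcase : s(a,b) = s(u,v)
  · rw [hcase, Finset.erase_insert huvE]
    rw [Sym2.eq_iff] at hcase
    rcases hcase with ⟨rfl, rfl⟩ | ⟨rfl, rfl⟩
    · exact hnr
    · exact fun hr => hnr hr.symm
  · have habE : s(a,b) ∈ E := by
      rw [gr_adj] at hadj
      rcases Finset.mem_insert.mp hadj.1 with h | h
      · exact absurd h hcase
      · exact h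
    rw [Finset.erase_insert_of_ne (fun hh => hcase hh.symm)]
    intro hr
    rcases reach_split hr with h1 | ⟨h1, h2⟩ | ⟨h1, h2⟩
    · exact forest_bridge hac habE hab h1
    · refine hnr ?_
      have hmono := reach_mono (Finset.erase_subset s(a,b) E) (x := a) (y := u) h1
      have hmono2 := reach_mono (Finset.erase_subset s(a,b) E) (x := v) (y := b) h2
      exact hmono.symm.trans ((reach_of_mem habE hab).trans hmono2.symm)
    · refine hnr ?_
      have hmono := reach_mono (Finset.erase_subset s(a,b) E) (x := a) (y := v) h1
      have hmono2 := reach_mono (Finset.erase_subset s(a,b) E) (x := u) (y := b) h2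
      exact hmono2.trans ((reach_of_mem habE hab).symm.trans hmono)

noncomputable instance (E : Finset (Sym2 V)) : Finite (gr E).ConnectedComponent :=
  Quot.finite _

/-- Deleting a bridge increases the number of components by one. -/
lemma count_erase {E : Finset (Sym2 V)} {a b : V} (hmem : s(a,b) ∈ E) (hne : a ≠ b)
    (hb : ¬ (gr (E.erase s(a,b))).Reachable a b) :
    Nat.card (gr (E.erase s(a,b))).ConnectedComponent
      = Nat.card (gr E).ConnectedComponent + 1 := by
  set H := gr (E.erase s(a,b)) with hH
  set G := gr E with hG
  have hins : insert s(a,b) (E.erase s(a,b)) = E := Finset.insert_erase hmem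
  have hsub : E.erase s(a,b) ⊆ E := Finset.erase_subset _ _
  let φ : H.ConnectedComponent → G.ConnectedComponent :=
    ConnectedComponent.map (SimpleGraph.Hom.ofLE (gr_mono hsub))
  have hφ : ∀ x : V, φ (H.connectedComponentMk x) = G.connectedComponentMk x := fun x => rfl
  -- the restricted map is a bijection
  have hbij : Function.Bijective
      (fun c : {c : H.ConnectedComponent // c ≠ H.connectedComponentMk b} => φ c.1) := by
    constructor
    · rintro ⟨c₁, hc₁⟩ ⟨c₂, hc₂⟩ hcc
      obtain ⟨x, rfl⟩ := c₁.exists_rep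
      obtain ⟨y, rfl⟩ := c₂.exists_rep
      have hcc' : φ (H.connectedComponentMk x) = φ (H.connectedComponentMk y) := hcc
      rw [hφ, hφ] at hcc'
      have hx : ¬ H.Reachable x b := fun hr => hc₁ (ConnectedComponent.eq.mpr hr)
      have hy : ¬ H.Reachable y b := fun hr => hc₂ (ConnectedComponent.eq.mpr hr)
      have hreach : G.Reachable x y := ConnectedComponent.eq.mp hcc'
      rw [hG, ← hins] at hreach
      rcases reach_split hreach with h1 | ⟨h1, h2⟩ | ⟨h1, h2⟩
      · exact Subtype.ext (ConnectedComponent.eq.mpr h1)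
      · exact absurd h2.symm hy
      · exact absurd h1 hx
    · intro d
      obtain ⟨x, rfl⟩ := d.exists_rep
      rw [show (Quot.mk G.Reachable x) = G.connectedComponentMk x from rfl]
      by_cases hxb : H.Reachable x b
      · refine ⟨⟨H.connectedComponentMk a, fun heq => hb (ConnectedComponent.eq.mp heq)⟩, ?_⟩
        have hax : G.Reachable a x :=
          ((reach_of_mem hmem hne).trans (reach_mono hsub hxb).symm)
        simp only [hφ]
        exact ConnectedComponent.eq.mpr hax
      · refine ⟨⟨H.connectedComponentMk x, fun heq => hxb (ConnectedComponent.eq.mp heq)⟩, ?_⟩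
        simp only [hφ]
  have e1 : Nat.card {c : H.ConnectedComponent // c ≠ H.connectedComponentMk b}
      = Nat.card G.ConnectedComponent := Nat.card_eq_of_bijective _ hbij
  classical
  have e2 : Nat.card H.ConnectedComponent
      = Nat.card {c : H.ConnectedComponent // c = H.connectedComponentMk b}
        + Nat.card {c : H.ConnectedComponent // c ≠ H.connectedComponentMk b} := by
    rw [← Nat.card_sum]
    exact (Nat.card_congr (Equiv.sumCompl (fun c => c = H.connectedComponentMk b))).symm
  have e3 : Nat.card {c : H.ConnectedComponent // c = H.connectedComponentMk b} = 1 :=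
    Nat.card_unique
  omega

lemma count_empty : Nat.card (gr (∅ : Finset (Sym2 V))).ConnectedComponent = Fintype.card V := by
  have hbot : gr (∅ : Finset (Sym2 V)) = ⊥ := by
    rw [gr]; simp
  have hbij : Function.Bijective
      (fun v : V => (gr (∅ : Finset (Sym2 V))).connectedComponentMk v) := by
    constructor
    · intro x y hxy
      have := ConnectedComponent.eq.mp hxy
      rw [hbot] at this
      exact reachable_bot.mp this
    · intro c; exact c.exists_rep
  rw [← Nat.card_eq_fintype_card]
  exact (Nat.card_eq_of_bijective _ hbij).symm

def Good (E : Finset (Sym2 V)) : Prop := ∀ e ∈ E, ¬ e.IsDiag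

lemma forest_count (E : Finset (Sym2 V)) (hg : Good E) (hac : (gr E).IsAcyclic) :
    Nat.card (gr E).ConnectedComponent + E.card = Fintype.card V := by
  revert hg hac
  induction E using Finset.strongInduction with
  | _ E ih =>
    intro hg hac
    rcases Finset.eq_empty_or_nonempty E with rfl | ⟨f, hf⟩
    · simpa using count_empty (V := V)
    · have hfd := hg f hf
      revert hfd hf
      induction f using Sym2.ind with
      | _ a b =>
      intro hf hfd
      have hne : a ≠ b := fun h => hfd (by simp [h])
      have hbridge : ¬ (gr (E.erase s(a,b))).Reachable a b := by
        have he : s(a,b) ∈ (gr E).edgeSet := gr_adj.mpr ⟨hf, hne⟩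
        have hbr := (isAcyclic_iff_forall_edge_isBridge.mp hac) he
        rw [isBridge_iff] at hbr
        have : gr (E.erase s(a,b)) = gr E \ fromEdgeSet {s(a,b)} := by
          ext x y
          simp only [gr, fromEdgeSet_adj, coe_erase, Set.mem_diff, mem_coe, sdiff_adj,
            Set.mem_singleton_iff]
          tauto
        rw [this]
        exact hbr
      have hsubset : E.erase s(a,b) ⊂ E := Finset.erase_ssubset hf
      have hgood : Good (E.erase s(a,b)) := fun e he => hg e (Finset.mem_of_mem_erase he)
      have hacy : (gr (E.erase s(a,b))).IsAcyclic := by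
        intro v c hc
        exact hac (c.mapLe (gr_mono (Finset.erase_subset _ _))) (hc.mapLe _)
      have hIH := ih _ hsubset hgood hacy
      have hcnt := count_erase hf hne hbridge
      have hcard : (E.erase s(a,b)).card + 1 = E.card := Finset.card_erase_add_one hf
      omega


section Colors

variable {C : Type*} (color : Sym2 V → C)

def HetF (E : Finset (Sym2 V)) : Prop :=
  Good E ∧ (gr E).IsAcyclic ∧ Set.InjOn color ↑E

def AUG (E : Finset (Sym2 V)) : Prop :=
  ∃ F : Finset (Sym2 V), HetF color F ∧ F.card = E.card + 1

lemma aug_of_cross_fresh {E : Finset (Sym2 V)} (hH : HetF color E) {x y : V}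
    (hne : x ≠ y) (hnr : ¬(gr E).Reachable x y)
    (hfresh : ∀ g ∈ E, color g ≠ color s(x,y)) : AUG color E := by
  have hnm : s(x,y) ∉ E := fun hm => hnr (reach_of_mem hm hne)
  refine ⟨insert s(x,y) E, ⟨?_, ?_, ?_⟩, Finset.card_insert_of_notMem hnm⟩
  · intro e he
    rcases Finset.mem_insert.mp he with rfl | he
    · simpa using hne
    · exact hH.1 e he
  · exact addcross hH.2.1 hnr hne
  · rw [Finset.coe_insert]
    intro e₁ h₁ e₂ h₂ heq
    rcases Set.mem_insert_iff.mp h₁ with rfl | h₁ <;>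
      rcases Set.mem_insert_iff.mp h₂ with rfl | h₂
    · rfl
    · exact absurd heq.symm (hfresh e₂ h₂)
    · exact absurd heq (hfresh e₁ h₁)
    · exact hH.2.2 h₁ h₂ heq

lemma step_hetf {E : Finset (Sym2 V)} (hH : HetF color E) {u v : V} {f : Sym2 V}
    (hne : u ≠ v) (hnr : ¬(gr E).Reachable u v) (hf : f ∈ E)
    (hcol : color f = color s(u,v)) :
    HetF color (insert s(u,v) (E.erase f)) ∧ (insert s(u,v) (E.erase f)).card = E.card := by
  have hnm : s(u,v) ∉ E := fun hm => hnr (reach_of_mem hm hne)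
  have hnm' : s(u,v) ∉ E.erase f := fun hm => hnm (Finset.mem_of_mem_erase hm)
  refine ⟨⟨?_, ?_, ?_⟩, ?_⟩
  · intro e he
    rcases Finset.mem_insert.mp he with rfl | he
    · simpa using hne
    · exact hH.1 e (Finset.mem_of_mem_erase he)
  · refine addcross (acyclic_mono (Finset.erase_subset _ _) hH.2.1) ?_ hne
    exact fun hr => hnr (reach_mono (Finset.erase_subset _ _) hr)
  · rw [Finset.coe_insert]
    intro e₁ h₁ e₂ h₂ heq
    rcases Set.mem_insert_iff.mp h₁ with rfl | h₁ <;>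
      rcases Set.mem_insert_iff.mp h₂ with rfl | h₂
    · rfl
    · exfalso
      rw [Finset.coe_erase] at h₂
      have : f = e₂ := hH.2.2 (Finset.mem_coe.mpr hf) h₂.1 (hcol.trans heq)
      exact h₂.2 (by simp [← this])
    · exfalso
      rw [Finset.coe_erase] at h₁
      have : f = e₁ := hH.2.2 (Finset.mem_coe.mpr hf) h₁.1 (hcol.trans heq.symm)
      exact h₁.2 (by simp [← this])
    · rw [Finset.coe_erase] at h₁ h₂
      exact hH.2.2 h₁.1 h₂.1 heq
  · rw [Finset.card_insert_of_notMem hnm', Finset.card_erase_of_mem hf]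
    have : 0 < E.card := Finset.card_pos.mpr ⟨f, hf⟩
    omega

/-- Alternating tail: list of (removed edge endpoints, new edge endpoints). -/
inductive Tail (E : Finset (Sym2 V)) : C → List ((V × V) × (V × V)) → Prop
  | nil (c : C) : Tail E c []
  | cons {cpr : C} {a b x y : V} {L : List ((V × V) × (V × V))} :
      s(a,b) ∈ E → color s(a,b) = cpr → x ≠ y → s(x,y) ∉ E →
      (gr E).Reachable x y → ¬(gr (E.erase s(a,b))).Reachable x y →
      Tail E (color s(x,y)) L → Tail E cpr (((a,b),(x,y)) :: L)

def lastC (c : C) (L : List ((V × V) × (V × V))) : C :=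
  L.foldl (fun _ q => color s(q.2.1, q.2.2)) c

@[simp] lemma lastC_nil (c : C) : lastC color c [] = c := rfl

@[simp] lemma lastC_cons (c : C) (q : (V × V) × (V × V)) (L : List ((V × V) × (V × V))) :
    lastC color c (q :: L) = lastC color (color s(q.2.1, q.2.2)) L := rfl

lemma lastC_snoc (c : C) (q : (V × V) × (V × V)) (L : List ((V × V) × (V × V))) :
    lastC color c (L ++ [q]) = color s(q.2.1, q.2.2) := by
  simp [lastC, List.foldl_append]

lemma tail_snoc {E : Finset (Sym2 V)} {c : C} {L : List ((V × V) × (V × V))}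
    (h : Tail color E c L) {a b x y : V}
    (h1 : s(a,b) ∈ E) (h2 : color s(a,b) = lastC color c L) (h3 : x ≠ y)
    (h4 : s(x,y) ∉ E) (h5 : (gr E).Reachable x y)
    (h6 : ¬(gr (E.erase s(a,b))).Reachable x y) :
    Tail color E c (L ++ [((a,b),(x,y))]) := by
  induction h with
  | nil c => exact Tail.cons h1 (by simpa using h2) h3 h4 h5 h6 (Tail.nil _)
  | cons m1 m2 m3 m4 m5 m6 _ ih =>
    exact Tail.cons m1 m2 m3 m4 m5 m6 (ih (by simpa using h2))

lemma tail_collision {E : Finset (Sym2 V)} {cpr : C} {L : List ((V × V) × (V × V))}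
    (h : Tail color E cpr L) {f₁ : Sym2 V}
    (hcol : ∃ q ∈ L, s(q.1.1, q.1.2) = f₁) :
    ∃ L₂, Tail color E (color f₁) L₂ ∧
      lastC color (color f₁) L₂ = lastC color cpr L ∧ L₂.length ≤ L.length := by
  induction h with
  | nil c => simp at hcol
  | @cons cpr a b x y L' m1 m2 m3 m4 m5 m6 ht ih =>
    rcases hcol with ⟨q, hq, hqe⟩
    rcases List.mem_cons.mp hq with rfl | hq'
    · refine ⟨((a,b),(x,y)) :: L', ?_, ?_, le_refl _⟩
      · simp only at hqe
        exact Tail.cons m1 (by rw [hqe]) m3 m4 m5 m6 ht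
      · simp
    · obtain ⟨L₂, hT, hlast, hlen⟩ := ih ⟨q, hq', hqe⟩
      exact ⟨L₂, hT, by simpa using hlast, by simp; omega⟩

lemma cne_of_tail {E : Finset (Sym2 V)} (hinj : Set.InjOn color ↑E)
    {cx : C} {L : List ((V × V) × (V × V))} (h : Tail color E cx L)
    {f₁ : Sym2 V} (hf₁ : f₁ ∈ E)
    (hfresh : ∀ g ∈ E, color g ≠ lastC color cx L)
    (hnocol : ∀ q ∈ L, s(q.1.1, q.1.2) ≠ f₁) : cx ≠ color f₁ := by
  cases h with
  | nil c =>
    intro hc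
    exact hfresh f₁ hf₁ (by simpa using hc.symm)
  | @cons cpr a b x y L' m1 m2 m3 m4 m5 m6 ht =>
    intro hc
    have : s(a,b) = f₁ := hinj (Finset.mem_coe.mpr m1) (Finset.mem_coe.mpr hf₁) (m2.trans hc)
    exact hnocol _ List.mem_cons_self this

lemma hne_of_tail {E : Finset (Sym2 V)} (hinj : Set.InjOn color ↑E)
    {cpr : C} {L : List ((V × V) × (V × V))} (h : Tail color E cpr L)
    {f₁ : Sym2 V} (hf₁ : f₁ ∈ E)
    (hfresh : ∀ g ∈ E, color g ≠ lastC color cpr L)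
    (hnocol : ∀ q ∈ L, s(q.1.1, q.1.2) ≠ f₁) :
    ∀ q ∈ L, color s(q.2.1, q.2.2) ≠ color f₁ := by
  induction h with
  | nil c => intro q hq; simp at hq
  | @cons cpr a b x y L' m1 m2 m3 m4 m5 m6 ht ih =>
    intro q hq
    rcases List.mem_cons.mp hq with rfl | hq'
    · exact cne_of_tail color hinj ht hf₁ (by simpa using hfresh)
        (fun q' hq' => hnocol q' (List.mem_cons_of_mem _ hq'))
    · exact ih (by simpa using hfresh) (fun q' hq' => hnocol q' (List.mem_cons_of_mem _ hq'))
        q hq'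

end Colors

section Transfer

variable {C : Type*} (color : Sym2 V → C)

variable {E : Finset (Sym2 V)} {u v : V} {f₁ : Sym2 V}

/-- Cross-edge stays non-reachable after the eager swap. -/
lemma t2 (hnr : ¬(gr E).Reachable u v) {x y : V}
    (hR : (gr E).Reachable x y) (hbad : ¬(gr (E.erase f₁)).Reachable x y) :
    ¬(gr (insert s(u,v) (E.erase f₁))).Reachable x y := by
  intro h
  rcases reach_split h with h1 | ⟨h1, h2⟩ | ⟨h1, h2⟩
  · exact hbad h1
  · have e1 := reach_mono (Finset.erase_subset _ _) h1
    have e2 := reach_mono (Finset.erase_subset _ _) h2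
    exact hnr (e1.symm.trans (hR.trans e2.symm))
  · have e1 := reach_mono (Finset.erase_subset _ _) h1
    have e2 := reach_mono (Finset.erase_subset _ _) h2
    exact hnr (e2.trans (hR.symm.trans e1))

lemma t3 (hnr : ¬(gr E).Reachable u v) (hnm : s(u,v) ∉ E) {x y : V} {g : Sym2 V}
    (hgE : g ∈ E) (hR : (gr E).Reachable x y)
    (hbad : ¬(gr (E.erase g)).Reachable x y) :
    ¬(gr ((insert s(u,v) (E.erase f₁)).erase g)).Reachable x y := by
  have hgne : g ≠ s(u,v) := fun hh => hnm (hh ▸ hgE)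
  have hrw : (insert s(u,v) (E.erase f₁)).erase g
      = insert s(u,v) ((E.erase f₁).erase g) :=
    Finset.erase_insert_of_ne (fun hh => hgne hh.symm)
  rw [hrw]
  intro h
  have hsub : (E.erase f₁).erase g ⊆ E.erase g :=
    Finset.erase_subset_erase g (Finset.erase_subset _ _)
  have hsubE : (E.erase f₁).erase g ⊆ E :=
    hsub.trans (Finset.erase_subset _ _)
  rcases reach_split h with h1 | ⟨h1, h2⟩ | ⟨h1, h2⟩
  · exact hbad (reach_mono hsub h1)
  · exact hnr ((reach_mono hsubE h1).symm.trans (hR.trans (reach_mono hsubE h2).symm))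
  · exact hnr ((reach_mono hsubE h2).trans (hR.symm.trans (reach_mono hsubE h1)))

lemma tail_transfer (hnr : ¬(gr E).Reachable u v) (hnm : s(u,v) ∉ E) (hf₁ : f₁ ∈ E)
    {cpr : C} {L : List ((V × V) × (V × V))} (h : Tail color E cpr L)
    (hnocol : ∀ q ∈ L, s(q.1.1, q.1.2) ≠ f₁)
    (hne2 : ∀ q ∈ L, s(q.2.1, q.2.2) ≠ s(u,v)) :
    Tail color (insert s(u,v) (E.erase f₁)) cpr L ∨
      ∃ (x y : V) (L₂ : List ((V × V) × (V × V))), x ≠ y ∧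
        s(x,y) ∉ insert s(u,v) (E.erase f₁) ∧
        ¬(gr (insert s(u,v) (E.erase f₁))).Reachable x y ∧
        Tail color (insert s(u,v) (E.erase f₁)) (color s(x,y)) L₂ ∧
        lastC color (color s(x,y)) L₂ = lastC color cpr L ∧ L₂.length ≤ L.length := by
  induction h with
  | nil c => exact Or.inl (Tail.nil _)
  | @cons cpr a b x y L' m1 m2 m3 m4 m5 m6 ht ih =>
    have hab_ne : s(a,b) ≠ f₁ := hnocol _ List.mem_cons_self
    have hxy_ne : s(x,y) ≠ s(u,v) := hne2 _ List.mem_cons_self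
    have habE₁ : s(a,b) ∈ insert s(u,v) (E.erase f₁) :=
      Finset.mem_insert_of_mem (Finset.mem_erase.mpr ⟨hab_ne, m1⟩)
    have hxyE₁ : s(x,y) ∉ insert s(u,v) (E.erase f₁) := by
      intro hm
      rcases Finset.mem_insert.mp hm with hh | hh
      · exact hxy_ne hh
      · exact m4 (Finset.mem_of_mem_erase hh)
    have ih' := ih (fun q hq => hnocol q (List.mem_cons_of_mem _ hq))
      (fun q hq => hne2 q (List.mem_cons_of_mem _ hq))
    by_cases hR₁ : (gr (insert s(u,v) (E.erase f₁))).Reachable x y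
    · have hbad₁ := t3 (f₁ := f₁) hnr hnm m1 m5 m6
      rcases ih' with hL | ⟨x', y', L₂, c1, c2, c3, c4, c5, c6⟩
      · exact Or.inl (Tail.cons habE₁ m2 m3 hxyE₁ hR₁ hbad₁ hL)
      · exact Or.inr ⟨x', y', L₂, c1, c2, c3, c4, by simpa using c5, by simp; omega⟩
    · rcases ih' with hL | ⟨x', y', L₂, c1, c2, c3, c4, c5, c6⟩
      · exact Or.inr ⟨x, y, L', m3, hxyE₁, hR₁, hL, by simp, by simp⟩
      · exact Or.inr ⟨x', y', L₂, c1, c2, c3, c4, by simpa using c5, by simp; omega⟩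

end Transfer

section Main

variable {C : Type*} (color : Sym2 V → C)

def Chain (E : Finset (Sym2 V)) (p : V × V) (L : List ((V × V) × (V × V))) : Prop :=
  p.1 ≠ p.2 ∧ s(p.1, p.2) ∉ E ∧ ¬(gr E).Reachable p.1 p.2 ∧
    Tail color E (color s(p.1, p.2)) L ∧
    ∀ g ∈ E, color g ≠ lastC color (color s(p.1, p.2)) L

lemma aug_of_chain_nil {E : Finset (Sym2 V)} {p : V × V} (hH : HetF color E)
    (hC : Chain color E p []) : AUG color E := by
  obtain ⟨h1, h2, h3, h4, h5⟩ := hC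
  exact aug_of_cross_fresh color hH h1 h3 (by simpa using h5)

lemma main_aug : ∀ (m : ℕ) (E : Finset (Sym2 V)) (p : V × V)
    (L : List ((V × V) × (V × V))), HetF color E → Chain color E p L →
    L.length ≤ m → AUG color E := by
  intro m
  induction m with
  | zero =>
    intro E p L hH hC hlen
    have : L = [] := List.length_eq_zero_iff.mp (Nat.le_zero.mp hlen)
    subst this
    exact aug_of_chain_nil color hH hC
  | succ m ih =>
    intro E p L hH hC hlen
    cases L with
    | nil => exact aug_of_chain_nil color hH hC
    | cons q L' =>
      obtain ⟨hp_ne, hp_nm, hp_nr, htail, hfresh⟩ := hC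
      cases htail with
      | @cons _ a b x y _ m1 m2 m3 m4 m5 m6 ht' =>
      by_cases hcol : ∃ q' ∈ L', s(q'.1.1, q'.1.2) = s(a,b)
      · -- shortcut: a later cell removes the same edge
        obtain ⟨L₂, hT₂, hlast₂, hlen₂⟩ := tail_collision color ht' hcol
        refine ih E p L₂ hH ⟨hp_ne, hp_nm, hp_nr, ?_, ?_⟩ ?_
        · rwa [m2] at hT₂
        · intro g hg
          rw [show lastC color (color s(p.1,p.2)) L₂
              = lastC color (color s(x,y)) L' by rw [← m2]; exact hlast₂]
          have := hfresh g hg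
          simpa using this
        · simp at hlen ⊢; omega
      · push_neg at hcol
        have hinj := hH.2.2
        have hfresh' : ∀ g ∈ E, color g ≠ lastC color (color s(x,y)) L' := by
          intro g hg; have := hfresh g hg; simpa using this
        have hne2 : ∀ q' ∈ L', s(q'.2.1, q'.2.2) ≠ s(p.1, p.2) := by
          intro q' hq' heq
          have hcne := hne_of_tail color hinj ht' m1 hfresh' hcol q' hq'
          rw [heq] at hcne
          exact hcne m2.symm
        have hxy_ne_p : s(x,y) ≠ s(p.1,p.2) := by
          intro heq
          have hcne := cne_of_tail color hinj ht' m1 hfresh' hcol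
          rw [← heq] at m2
          exact hcne m2.symm
        -- the eager swap
        obtain ⟨hH₁, hcard₁⟩ := step_hetf color hH hp_ne hp_nr m1 m2
        have hcross₁ := t2 hp_nr m5 m6
        have hxyE₁ : s(x,y) ∉ insert s(p.1,p.2) (E.erase s(a,b)) := by
          intro hm
          rcases Finset.mem_insert.mp hm with hh | hh
          · exact hxy_ne_p hh
          · exact m4 (Finset.mem_of_mem_erase hh)
        have hfresh₁ : ∀ g ∈ insert s(p.1,p.2) (E.erase s(a,b)),
            color g ≠ lastC color (color s(x,y)) L' := by
          intro g hg
          rcases Finset.mem_insert.mp hg with rfl | hg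
          · rw [← m2]; exact hfresh' _ m1
          · exact hfresh' _ (Finset.mem_of_mem_erase hg)
        rcases tail_transfer color hp_nr hp_nm m1 ht' hcol hne2 with hL | hRight
        · refine ?_
          have hchain₁ : Chain color (insert s(p.1,p.2) (E.erase s(a,b))) (x,y) L' :=
            ⟨m3, hxyE₁, hcross₁, hL, hfresh₁⟩
          obtain ⟨F, hF, hFc⟩ := ih _ (x,y) L' hH₁ hchain₁ (by simp at hlen ⊢; omega)
          exact ⟨F, hF, by rw [hFc, hcard₁]⟩
        · obtain ⟨x', y', L₂, c1, c2, c3, c4, c5, c6⟩ := hRight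
          have hchain₁ : Chain color (insert s(p.1,p.2) (E.erase s(a,b))) (x',y') L₂ := by
            refine ⟨c1, c2, c3, c4, ?_⟩
            intro g hg
            rw [c5]
            exact hfresh₁ g hg
          obtain ⟨F, hF, hFc⟩ := ih _ (x',y') L₂ hH₁ hchain₁ (by simp at hlen ⊢; omega)
          exact ⟨F, hF, by rw [hFc, hcard₁]⟩

end Main

section Rch

variable {C : Type*} (color : Sym2 V → C)

/-- Edges reachable in the exchange digraph from cross edges. -/
inductive Rch (E : Finset (Sym2 V)) : Sym2 V → Prop
  | cross {x y : V} : x ≠ y → s(x,y) ∉ E → ¬(gr E).Reachable x y → Rch E s(x,y)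
  | step {e' : Sym2 V} {a b x y : V} : Rch E e' → s(a,b) ∈ E → color s(a,b) = color e' →
      x ≠ y → s(x,y) ∉ E → (gr E).Reachable x y →
      ¬(gr (E.erase s(a,b))).Reachable x y → Rch E s(x,y)

lemma chain_of_rch {E : Finset (Sym2 V)} {e : Sym2 V} (h : Rch color E e) :
    ∃ (p : V × V) (L : List ((V × V) × (V × V))), p.1 ≠ p.2 ∧ s(p.1,p.2) ∉ E ∧
      ¬(gr E).Reachable p.1 p.2 ∧ Tail color E (color s(p.1,p.2)) L ∧
      lastC color (color s(p.1,p.2)) L = color e := by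
  induction h with
  | @cross x y h1 h2 h3 => exact ⟨(x,y), [], h1, h2, h3, Tail.nil _, rfl⟩
  | @step e' a b x y _ m1 m2 m3 m4 m5 m6 ih =>
    obtain ⟨p, L, c1, c2, c3, c4, c5⟩ := ih
    refine ⟨p, L ++ [((a,b),(x,y))], c1, c2, c3, ?_, ?_⟩
    · exact tail_snoc color c4 m1 (by rw [c5]; exact m2) m3 m4 m5 m6
    · rw [lastC_snoc]

lemma aug_of_fresh_rch {E : Finset (Sym2 V)} (hH : HetF color E) {e : Sym2 V}
    (h : Rch color E e) (hfresh : ∀ g ∈ E, color g ≠ color e) : AUG color E := by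
  obtain ⟨p, L, c1, c2, c3, c4, c5⟩ := chain_of_rch color h
  exact main_aug color L.length E p L hH
    ⟨c1, c2, c3, c4, fun g hg => by rw [c5]; exact hfresh g hg⟩ (le_refl _)

end Rch

section Count

variable {C : Type*} (color : Sym2 V → C)

lemma pairbound [DecidableEq C] (c : C) :
    ((univ ×ˢ univ).filter
        (fun pq : V × V => pq.1 ≠ pq.2 ∧ color s(pq.1, pq.2) = c)).card ≤
      2 * (univ.filter
        (fun e : Sym2 V => ¬ e.IsDiag ∧ color e = c)).card := by
  classical
  set B := (univ ×ˢ univ).filter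
      (fun pq : V × V => pq.1 ≠ pq.2 ∧ color s(pq.1, pq.2) = c) with hB
  have h1 : B.card ≤ 2 * (B.image (fun pq : V × V => s(pq.1, pq.2))).card := by
    apply Finset.card_le_mul_card_image
    intro a ha
    rw [Finset.mem_image] at ha
    obtain ⟨pq, hpq, rfl⟩ := ha
    have hsub : B.filter (fun x : V × V => s(x.1, x.2) = s(pq.1, pq.2))
        ⊆ {(pq.1, pq.2), (pq.2, pq.1)} := by
      intro x hx
      rw [Finset.mem_filter] at hx
      rcases Sym2.eq_iff.mp hx.2 with ⟨h1, h2⟩ | ⟨h1, h2⟩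
      · simp [Finset.mem_insert, Prod.ext_iff, h1, h2]
      · simp [Finset.mem_insert, Prod.ext_iff, h1, h2]
    calc (B.filter (fun x : V × V => s(x.1, x.2) = s(pq.1, pq.2))).card
        ≤ ({(pq.1, pq.2), (pq.2, pq.1)} : Finset (V × V)).card := Finset.card_le_card hsub
      _ ≤ 2 := Finset.card_insert_le _ _ |>.trans (by simp)
  refine h1.trans ?_
  have h2 : B.image (fun pq : V × V => s(pq.1, pq.2))
      ⊆ univ.filter (fun e : Sym2 V => ¬ e.IsDiag ∧ color e = c) := by
    intro e he
    rw [Finset.mem_image] at he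
    obtain ⟨pq, hpq, rfl⟩ := he
    rw [hB, Finset.mem_filter] at hpq
    rw [Finset.mem_filter]
    refine ⟨Finset.mem_univ _, ?_, hpq.2.2⟩
    rw [Sym2.mk_isDiag_iff]
    exact hpq.2.1
  exact Nat.mul_le_mul_left 2 (Finset.card_le_card h2)

lemma grow [DecidableEq C] {E : Finset (Sym2 V)} (hH : HetF color E)
    (hcnt : ∀ c : C, 2 * (univ.filter
        (fun e : Sym2 V => ¬ e.IsDiag ∧ color e = c)).card
      ≤ Fintype.card V)
    (hsize : E.card + 2 ≤ Fintype.card V) : AUG color E := by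
  classical
  by_contra hno
  -- no augmentation: every reachable edge has a used color
  have NA : ∀ e, Rch color E e → ∃ f ∈ E, color f = color e := by
    intro e he
    by_contra hcontra
    push_neg at hcontra
    exact hno (aug_of_fresh_rch color hH he fun g hg => hcontra g hg)
  set D := E.filter (fun f => ∃ e, Rch color E e ∧ color e = color f) with hD
  have hD_sub : D ⊆ E := Finset.filter_subset _ _
  set n := Fintype.card V with hn
  -- property P
  have P : ∀ x y : V, ¬(gr (E \ D)).Reachable x y → x ≠ y →
      ∃ f ∈ D, color s(x,y) = color f := by
    intro x y hnr hne
    by_cases hmem : s(x,y) ∈ E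
    · by_cases hmd : s(x,y) ∈ D
      · exact ⟨s(x,y), hmd, rfl⟩
      · exfalso
        exact hnr (reach_of_mem (Finset.mem_sdiff.mpr ⟨hmem, hmd⟩) hne)
    · have hgetD : ∀ f₂ ∈ E, color f₂ = color s(x,y) → Rch color E s(x,y) →
          ∃ f ∈ D, color s(x,y) = color f := by
        intro f₂ hf₂ hc₂ hrch
        refine ⟨f₂, ?_, hc₂.symm⟩
        rw [hD, Finset.mem_filter]
        exact ⟨hf₂, s(x,y), hrch, hc₂.symm⟩
      by_cases hreach : (gr E).Reachable x y
      · obtain ⟨f, hfD, hfE, hcut⟩ := exists_cut hH.2.1 hreach hnr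
        have hstep : Rch color E s(x,y) := by
          obtain ⟨e', he', hce⟩ := (Finset.mem_filter.mp (hD ▸ hfD)).2
          clear hfD
          revert hfE hcut hce
          induction f using Sym2.ind with
          | _ a b =>
            intro hfE hcut hce
            exact Rch.step he' hfE hce.symm hne hmem hreach hcut
        obtain ⟨f₂, hf₂, hc₂⟩ := NA _ hstep
        exact hgetD f₂ hf₂ hc₂ hstep
      · have hstep : Rch color E s(x,y) := Rch.cross hne hmem hreach
        obtain ⟨f₂, hf₂, hc₂⟩ := NA _ hstep
        exact hgetD f₂ hf₂ hc₂ hstep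
  -- counting
  set H := gr (E \ D) with hHdef
  haveI : Fintype H.ConnectedComponent := Fintype.ofFinite _
  set κ : V → H.ConnectedComponent := H.connectedComponentMk with hκ
  set t := Fintype.card H.ConnectedComponent with htdef
  have hgood : Good (E \ D) := fun e he => hH.1 e (Finset.mem_sdiff.mp he).1
  have hacy : H.IsAcyclic := acyclic_mono Finset.sdiff_subset hH.2.1
  have hFC : t + (E \ D).card = n := by
    rw [htdef, ← Nat.card_eq_fintype_card]
    exact forest_count (E \ D) hgood hacy
  have hsdcard : (E \ D).card = E.card - D.card := Finset.card_sdiff_of_subset hD_sub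
  have hDle : D.card ≤ E.card := Finset.card_le_card hD_sub
  set fib : H.ConnectedComponent → ℕ :=
    fun c => (univ.filter (fun v => κ v = c)).card with hfib
  have hfibsum : ∑ c, fib c = n := by
    rw [hfib, hn]
    exact (Finset.card_eq_sum_card_fiberwise (fun v _ => Finset.mem_univ (κ v))).symm
  have hfib1 : ∀ c, 1 ≤ fib c := by
    intro c
    obtain ⟨x, hx⟩ := c.exists_rep
    rw [hfib]
    refine Finset.card_pos.mpr ⟨x, ?_⟩
    rw [Finset.mem_filter]
    exact ⟨Finset.mem_univ _, hx⟩
  have hfible : ∀ c, fib c + (t - 1) ≤ n := by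
    intro c
    have hsplit : fib c + ∑ c' ∈ univ.erase c, fib c' = n := by
      rw [Finset.add_sum_erase _ _ (Finset.mem_univ c)]
      exact hfibsum
    have hrest : t - 1 ≤ ∑ c' ∈ univ.erase c, fib c' := by
      have : (univ.erase c).card = t - 1 := by
        rw [Finset.card_erase_of_mem (Finset.mem_univ c), htdef, Finset.card_univ]
      calc t - 1 = ∑ c' ∈ univ.erase c, 1 := by rw [Finset.sum_const, this, smul_eq_mul, mul_one]
        _ ≤ ∑ c' ∈ univ.erase c, fib c' := Finset.sum_le_sum (fun c' _ => hfib1 c')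
    omega
  set N := ((univ ×ˢ univ).filter (fun pq : V × V => κ pq.2 ≠ κ pq.1)).card with hN
  -- lower bound
  have hlower : n * (t - 1) ≤ N := by
    rw [hN, Finset.card_filter, Finset.sum_product]
    have hper : ∀ u : V, t - 1 ≤ ∑ v : V, if κ v ≠ κ u then 1 else 0 := by
      intro u
      have h1 : ∑ v : V, (if κ v ≠ κ u then 1 else 0)
          = (univ.filter (fun v => κ v ≠ κ u)).card := (Finset.card_filter _ _).symm
      have h2 : (univ.filter (fun v => κ v ≠ κ u)).card
          + (univ.filter (fun v => ¬ (κ v ≠ κ u))).card = n := by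
        rw [hn, ← Finset.card_univ]
        exact Finset.card_filter_add_card_filter_not _
      have h3 : (univ.filter (fun v => ¬ (κ v ≠ κ u))).card = fib (κ u) := by
        rw [hfib]
        congr 1
        ext v
        simp [not_not]
      have h4 := hfible (κ u)
      omega
    calc n * (t - 1) = ∑ _u : V, (t - 1) := by rw [Finset.sum_const, Finset.card_univ, ← hn, smul_eq_mul]
      _ ≤ ∑ u : V, ∑ v : V, if κ v ≠ κ u then 1 else 0 := Finset.sum_le_sum (fun u _ => hper u)
  -- upper bound
  have hupper : N ≤ D.card * n := by
    have hsub : (univ ×ˢ univ).filter (fun pq : V × V => κ pq.2 ≠ κ pq.1)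
        ⊆ D.biUnion (fun f => (univ ×ˢ univ).filter
            (fun pq : V × V => pq.1 ≠ pq.2 ∧ color s(pq.1, pq.2) = color f)) := by
      intro pq hpq
      rw [Finset.mem_filter] at hpq
      have hnr : ¬ H.Reachable pq.1 pq.2 := by
        intro hr
        exact hpq.2 (ConnectedComponent.eq.mpr hr.symm)
      have hne : pq.1 ≠ pq.2 := by
        intro hh
        exact hpq.2 (by rw [hh])
      obtain ⟨f, hfD, hcf⟩ := P pq.1 pq.2 hnr hne
      rw [Finset.mem_biUnion]
      exact ⟨f, hfD, Finset.mem_filter.mpr ⟨hpq.1, hne, hcf⟩⟩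
    calc N ≤ (D.biUnion (fun f => (univ ×ˢ univ).filter
            (fun pq : V × V => pq.1 ≠ pq.2 ∧ color s(pq.1, pq.2) = color f))).card :=
          Finset.card_le_card hsub
      _ ≤ ∑ f ∈ D, ((univ ×ˢ univ).filter
            (fun pq : V × V => pq.1 ≠ pq.2 ∧ color s(pq.1, pq.2) = color f)).card :=
          Finset.card_biUnion_le
      _ ≤ ∑ _f ∈ D, n := by
          refine Finset.sum_le_sum (fun f _ => ?_)
          exact (pairbound color (color f)).trans (hcnt (color f))
      _ = D.card * n := by rw [Finset.sum_const, smul_eq_mul]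
  have hnpos : 0 < n := by omega
  have htd : t - 1 ≤ D.card := by
    have := hlower.trans hupper
    rw [mul_comm D.card n] at this
    exact Nat.le_of_mul_le_mul_left this hnpos
  omega

end Count

section Exists

variable {C : Type*} (color : Sym2 V → C)

lemma exists_hetf [DecidableEq C]
    (hcnt : ∀ c : C, 2 * (univ.filter
        (fun e : Sym2 V => ¬ e.IsDiag ∧ color e = c)).card ≤ Fintype.card V) :
    ∀ j, j + 1 ≤ Fintype.card V → ∃ E, HetF color E ∧ E.card = j := by
  intro j
  induction j with
  | zero =>
    intro _
    refine ⟨∅, ⟨fun e he => absurd he (Finset.notMem_empty e), ?_, ?_⟩, rfl⟩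
    · have hbot : gr (∅ : Finset (Sym2 V)) = ⊥ := by rw [gr]; simp
      rw [hbot]
      exact isAcyclic_bot
    · simp
  | succ j ih =>
    intro hj
    obtain ⟨E, hH, hcard⟩ := ih (by omega)
    obtain ⟨F, hF, hFcard⟩ := grow color hH hcnt (by omega)
    exact ⟨F, hF, by omega⟩

end Exists

end HetAux


open HetAux in
theorem stmt8 {V C : Type*} [Fintype V] (color : Sym2 V → C) (n : ℕ)
    (hn : Fintype.card V = n) (h2 : 2 ≤ n)
    (h : ∀ c, (colorCount (⊤ : SimpleGraph V) color c : ℚ) ≤ (n : ℚ) / 2) :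
    ∃ F : SimpleGraph V, F ≤ (⊤ : SimpleGraph V) ∧ F.IsTree ∧
      Set.InjOn color F.edgeSet := by
  classical
  subst hn
  simp only [colorCount] at h
  have hcnt : ∀ c : C, 2 * (univ.filter
      (fun e : Sym2 V => ¬ e.IsDiag ∧ color e = c)).card ≤ Fintype.card V := by
    intro c
    have hcc : Nat.card {e : Sym2 V // e ∈ (⊤ : SimpleGraph V).edgeSet ∧ color e = c}
        = (univ.filter (fun e : Sym2 V => ¬ e.IsDiag ∧ color e = c)).card := by
      rw [Nat.card_eq_fintype_card]
      have hiff : ∀ e : Sym2 V,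
          (e ∈ (⊤ : SimpleGraph V).edgeSet ∧ color e = c) ↔ (¬ e.IsDiag ∧ color e = c) := by
        intro e
        rw [SimpleGraph.edgeSet_top]
        simp
      calc Fintype.card {e : Sym2 V // e ∈ (⊤ : SimpleGraph V).edgeSet ∧ color e = c}
          = Fintype.card {e : Sym2 V // ¬ e.IsDiag ∧ color e = c} :=
            Fintype.card_congr (Equiv.subtypeEquivRight hiff)
        _ = (univ.filter (fun e : Sym2 V => ¬ e.IsDiag ∧ color e = c)).card :=
            Fintype.card_subtype _
    have h2q := h c
    rw [hcc, le_div_iff₀ (by norm_num : (0:ℚ) < 2)] at h2q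
    have h3 : ((2 * (univ.filter (fun e : Sym2 V => ¬ e.IsDiag ∧ color e = c)).card : ℕ) : ℚ)
        ≤ ((Fintype.card V : ℕ) : ℚ) := by push_cast; linarith
    exact_mod_cast h3
  obtain ⟨E, hH, hcard⟩ := exists_hetf color hcnt (Fintype.card V - 1) (by omega)
  have hES : (gr E).edgeSet = ↑E := by
    rw [gr, edgeSet_fromEdgeSet]
    ext e
    exact ⟨fun hh => hh.1, fun hh => ⟨hh, hH.1 e hh⟩⟩
  have hcount := forest_count E hH.1 hH.2.1
  have hone : Nat.card (gr E).ConnectedComponent = 1 := by omega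
  have hsub : Subsingleton (gr E).ConnectedComponent ∧ Nonempty (gr E).ConnectedComponent := by
    rw [← Nat.card_eq_one_iff_unique]
    exact hone
  refine ⟨gr E, le_top, ⟨?_, hH.2.1⟩, ?_⟩
  · rw [connected_iff]
    refine ⟨?_, Fintype.card_pos_iff.mp (by omega)⟩
    intro u v
    have := hsub.1
    exact ConnectedComponent.eq.mp (Subsingleton.elim _ _)
  · rw [hES]
    exact hH.2.2
end

section
/- An edge-colored connected graph G has a heterochromatic spanning tree if and only if for every subset R of the color set C, the number of components of G - E_R(G) is at most |R| + 1. -/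
open SimpleGraph Finset

namespace HetAux

variable {V : Type*}

lemma reach_sup_edge {K : SimpleGraph V} {x y : V} {u v : V}
    (h : (K ⊔ edge x y).Reachable u v) :
    K.Reachable u v ∨ (K.Reachable u x ∧ K.Reachable y v) ∨
      (K.Reachable u y ∧ K.Reachable x v) := by
  obtain ⟨w⟩ := h
  induction w with
  | nil => exact Or.inl (Reachable.refl _)
  | @cons a b c hab p ih =>
    rcases hab with hab | hab
    · rcases ih with h | ⟨h1, h2⟩ | ⟨h1, h2⟩
      · exact Or.inl (hab.reachable.trans h)
      · exact Or.inr (Or.inl ⟨hab.reachable.trans h1, h2⟩)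
      · exact Or.inr (Or.inr ⟨hab.reachable.trans h1, h2⟩)
    · rw [edge_adj] at hab
      rcases hab.1 with ⟨rfl, rfl⟩ | ⟨rfl, rfl⟩
      · rcases ih with h | ⟨h1, h2⟩ | ⟨h1, h2⟩
        · exact Or.inr (Or.inl ⟨Reachable.refl _, h⟩)
        · exact Or.inr (Or.inl ⟨Reachable.refl _, h2⟩)
        · exact Or.inl h2
      · rcases ih with h | ⟨h1, h2⟩ | ⟨h1, h2⟩
        · exact Or.inr (Or.inr ⟨Reachable.refl _, h⟩)
        · exact Or.inl h2
        · exact Or.inr (Or.inr ⟨Reachable.refl _, h2⟩)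

lemma omega_le_of_le [Finite V] {H K : SimpleGraph V} (h : H ≤ K) : omega K ≤ omega H := by
  apply Nat.card_le_card_of_surjective
    (ConnectedComponent.map (Hom.ofLE h))
  intro c
  refine ConnectedComponent.ind (fun v => ⟨H.connectedComponentMk v, ?_⟩) c
  rfl

lemma omega_congr {H K : SimpleGraph V}
    (h : ∀ u v, H.Reachable u v ↔ K.Reachable u v) : omega H = omega K := by
  have hre : H.Reachable = K.Reachable := by
    funext u v; exact propext (h u v)
  show Nat.card (Quot H.Reachable) = Nat.card (Quot K.Reachable)
  rw [hre]

lemma omega_sup_edge_of_reachable {K : SimpleGraph V} {x y : V}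
    (hr : K.Reachable x y) : omega (K ⊔ edge x y) = omega K := by
  refine omega_congr fun u v => ⟨fun h => ?_, fun h => h.mono le_sup_left⟩
  rcases reach_sup_edge h with h | ⟨h1, h2⟩ | ⟨h1, h2⟩
  · exact h
  · exact (h1.trans hr).trans h2
  · exact (h1.trans hr.symm).trans h2

lemma omega_sup_edge_succ [Finite V] {K : SimpleGraph V} {x y : V} (hxy : x ≠ y)
    (hn : ¬K.Reachable x y) : omega K = omega (K ⊔ edge x y) + 1 := by
  classical
  set K' := K ⊔ edge x y with hK'
  have hKle : K ≤ K' := le_sup_left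
  have hadj : K'.Adj x y := by
    rw [hK', sup_adj, edge_adj]; exact Or.inr ⟨Or.inl ⟨rfl, rfl⟩, hxy⟩
  have hwd : ∀ (v w : V) (p : K'.Walk v w), p.IsPath →
      (if K.Reachable v y then K.connectedComponentMk x else K.connectedComponentMk v) =
      (if K.Reachable w y then K.connectedComponentMk x else K.connectedComponentMk w) := by
    intro v w p _
    rcases reach_sup_edge (⟨p⟩ : K'.Reachable v w) with h | ⟨h1, h2⟩ | ⟨h1, h2⟩
    · by_cases hv : K.Reachable v y <;> by_cases hw : K.Reachable w y
      · simp [hv, hw]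
      · exact absurd (h.symm.trans hv) hw
      · exact absurd (h.trans hw) hv
      · simpa [hv, hw] using ConnectedComponent.sound h
    · have hw : K.Reachable w y := h2.symm
      by_cases hv : K.Reachable v y
      · simp [hv, hw]
      · simpa [hv, hw] using ConnectedComponent.sound h1
    · have hv : K.Reachable v y := h1
      by_cases hw : K.Reachable w y
      · simp [hv, hw]
      · simpa [hv, hw] using (ConnectedComponent.sound h2)
  let g0 : K'.ConnectedComponent → K.ConnectedComponent :=
    ConnectedComponent.lift
      (fun v => if K.Reachable v y then K.connectedComponentMk x else K.connectedComponentMk v)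
      hwd
  let f : K.ConnectedComponent → K'.ConnectedComponent ⊕ Unit := fun X =>
    if X = K.connectedComponentMk y then Sum.inr Unit.unit
    else Sum.inl (X.map (Hom.ofLE hKle))
  let g : K'.ConnectedComponent ⊕ Unit → K.ConnectedComponent := fun Z =>
    match Z with
    | Sum.inr _ => K.connectedComponentMk y
    | Sum.inl Y => g0 Y
  have hbij : Function.Bijective f := by
    have hgf : ∀ X, g (f X) = X := by
      refine ConnectedComponent.ind fun v => ?_
      by_cases hv : K.connectedComponentMk v = K.connectedComponentMk y
      · simp only [f, if_pos hv, g]; exact hv.symm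
      · have hvy : ¬K.Reachable v y := fun h => hv (ConnectedComponent.sound h)
        simp only [f, if_neg hv, g, g0, ConnectedComponent.map_mk,
          Hom.ofLE_apply, ConnectedComponent.lift_mk, if_neg hvy]
    have hfg : ∀ Z, f (g Z) = Z := by
      rintro (Y | ⟨⟩)
      · refine ConnectedComponent.ind (fun v => ?_) Y
        by_cases hv : K.Reachable v y
        · have : g (Sum.inl (K'.connectedComponentMk v)) = K.connectedComponentMk x := by
            simp only [g, g0, ConnectedComponent.lift_mk, if_pos hv]
          rw [this]
          have hxny : K.connectedComponentMk x ≠ K.connectedComponentMk y := fun h =>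
            hn (ConnectedComponent.exact h)
          simp only [f, if_neg hxny, ConnectedComponent.map_mk,
            Hom.ofLE_apply]
          congr 1
          exact ConnectedComponent.sound (hadj.reachable.trans (hv.mono hKle).symm)
        · have : g (Sum.inl (K'.connectedComponentMk v)) = K.connectedComponentMk v := by
            simp only [g, g0, ConnectedComponent.lift_mk, if_neg hv]
          rw [this]
          have hvny : K.connectedComponentMk v ≠ K.connectedComponentMk y := fun h =>
            hv (ConnectedComponent.exact h)
          simp only [f, if_neg hvny, ConnectedComponent.map_mk,
            Hom.ofLE_apply]
      · simp only [g, f, if_pos rfl]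
    exact Function.bijective_iff_has_inverse.2 ⟨g, hgf, hfg⟩
  have := Nat.card_eq_of_bijective f hbij
  rw [omega, omega, this, Nat.card_sum]
  simp

lemma omega_le_sup_edge_add_one [Finite V] (K : SimpleGraph V) (x y : V) :
    omega K ≤ omega (K ⊔ edge x y) + 1 := by
  by_cases hxy : x = y
  · subst hxy; rw [sup_edge_self]; exact Nat.le_succ _
  by_cases hr : K.Reachable x y
  · rw [omega_sup_edge_of_reachable hr]; exact Nat.le_succ _
  · exact (omega_sup_edge_succ hxy hr).le

lemma supermod_edge [Finite V] {A C : SimpleGraph V} (hCA : C ≤ A) (x y : V) :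
    omega A + omega (C ⊔ edge x y) ≤ omega (A ⊔ edge x y) + omega C := by
  by_cases hxy : x = y
  · subst hxy; rw [sup_edge_self, sup_edge_self]
  by_cases hr : A.Reachable x y
  · rw [omega_sup_edge_of_reachable hr]
    have := omega_le_of_le (le_sup_left : C ≤ C ⊔ edge x y)
    omega
  · have hr' : ¬C.Reachable x y := fun h => hr (h.mono hCA)
    rw [omega_sup_edge_succ hxy hr, omega_sup_edge_succ hxy hr']
    omega

lemma supermod_aux [Finite V] (s : Finset (Sym2 V)) :
    ∀ A C : SimpleGraph V, C ≤ A →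
      omega A + omega (C ⊔ fromEdgeSet ↑s) ≤ omega (A ⊔ fromEdgeSet ↑s) + omega C := by
  classical
  induction s using Finset.induction with
  | empty => intro A C _; simp
  | @insert e s he ih =>
    intro A C hCA
    induction e using Sym2.ind with
    | _ x y =>
    have hsplit : (fromEdgeSet ↑(insert s(x, y) s) : SimpleGraph V)
        = edge x y ⊔ fromEdgeSet ↑s := by
      rw [Finset.coe_insert, Set.insert_eq, fromEdgeSet_union]; rfl
    rw [hsplit, ← sup_assoc, ← sup_assoc]
    have h1 := ih (A ⊔ edge x y) (C ⊔ edge x y) (sup_le_sup_right hCA _)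
    have h2 := supermod_edge hCA x y
    omega

lemma omega_supermodular [Finite V] (A B : SimpleGraph V) :
    omega A + omega B ≤ omega (A ⊔ B) + omega (A ⊓ B) := by
  classical
  have hfin : B.edgeSet.Finite := Set.toFinite _
  have h := supermod_aux hfin.toFinset A (A ⊓ B) inf_le_left
  rw [Set.Finite.coe_toFinset, fromEdgeSet_edgeSet] at h
  have e1 : (A ⊓ B) ⊔ B = B := sup_eq_right.mpr inf_le_right
  rwa [e1] at h

lemma deleteEdges_sup_edge_of_adj {K : SimpleGraph V} {x y : V} (h : K.Adj x y) :
    (K.deleteEdges {s(x, y)}) ⊔ edge x y = K := by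
  ext u v
  simp only [sup_adj, deleteEdges_adj, Set.mem_singleton_iff, edge_adj]
  constructor
  · rintro (⟨h1, _⟩ | ⟨(⟨rfl, rfl⟩ | ⟨rfl, rfl⟩), _⟩)
    · exact h1
    · exact h
    · exact h.symm
  · intro hAdj
    by_cases heq : s(u, v) = s(x, y)
    · right
      rw [Sym2.eq_iff] at heq
      exact ⟨heq, hAdj.ne⟩
    · exact Or.inl ⟨hAdj, heq⟩

lemma omega_deleteEdges_single [Finite V] (K : SimpleGraph V) (e : Sym2 V) :
    omega (K.deleteEdges {e}) ≤ omega K + 1 := by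
  induction e using Sym2.ind with
  | _ x y =>
  by_cases h : K.Adj x y
  · conv_rhs => rw [← deleteEdges_sup_edge_of_adj h]
    exact omega_le_sup_edge_add_one _ x y
  · have : K.deleteEdges {s(x, y)} = K := by
      rw [deleteEdges_eq_self, Set.disjoint_singleton_right]
      exact fun hc => h hc
    rw [this]; exact Nat.le_succ _

lemma omega_deleteEdges_finset [Finite V] (K : SimpleGraph V) (T : Finset (Sym2 V)) :
    omega (K.deleteEdges ↑T) ≤ omega K + T.card := by
  classical
  induction T using Finset.induction with
  | empty => simp
  | @insert e T he ih =>
    have hstep : (K.deleteEdges ↑(insert e T)) = (K.deleteEdges ↑T).deleteEdges {e} := by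
      rw [deleteEdges_deleteEdges, Finset.coe_insert, Set.insert_eq, Set.union_comm]
    rw [hstep, Finset.card_insert_of_notMem he]
    have := omega_deleteEdges_single (K.deleteEdges ↑T) e
    omega

lemma omega_eq_one [Finite V] {K : SimpleGraph V} (h : K.Connected) : omega K = 1 := by
  rw [omega, Nat.card_eq_one_iff_unique]
  constructor
  · constructor
    intro a b
    refine ConnectedComponent.ind₂ (fun v w => ?_) a b
    exact ConnectedComponent.sound (h.preconnected v w)
  · obtain ⟨v⟩ := h.nonempty
    exact ⟨K.connectedComponentMk v⟩

lemma connected_of_omega_le_one [Finite V] [Nonempty V] {K : SimpleGraph V}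
    (h : omega K ≤ 1) : K.Connected := by
  haveI : Nonempty K.ConnectedComponent := ⟨K.connectedComponentMk (Classical.arbitrary V)⟩
  have hpos : 0 < Nat.card K.ConnectedComponent := Nat.card_pos
  have h1 : Nat.card K.ConnectedComponent = 1 := le_antisymm h hpos
  have hsub : Subsingleton K.ConnectedComponent := (Nat.card_eq_one_iff_unique.mp h1).1
  refine ⟨fun u v => ?_⟩
  exact ConnectedComponent.exact (hsub.elim _ _)

lemma exists_tree [Finite V] :
    ∀ (n : ℕ) (G : SimpleGraph V), G.edgeSet.ncard = n → G.Connected →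
      ∃ F, F ≤ G ∧ F.IsTree := by
  intro n
  induction n using Nat.strong_induction_on with
  | _ n ih =>
  intro G hn hG
  by_cases hac : G.IsAcyclic
  · exact ⟨G, le_refl _, ⟨hG, hac⟩⟩
  · rw [isAcyclic_iff_forall_adj_isBridge] at hac
    push_neg at hac
    obtain ⟨x, y, hadj, hnb⟩ := hac
    rw [isBridge_iff] at hnb
    have hreach : (G.deleteEdges {s(x, y)}).Reachable x y := by
      by_contra hc; exact hnb hc
    set G' := G.deleteEdges {s(x, y)} with hG'
    have hsup : G' ⊔ edge x y = G := deleteEdges_sup_edge_of_adj hadj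
    have hconn' : G'.Connected := by
      haveI := hG.nonempty
      refine ⟨fun u v => ?_⟩
      have := hG.preconnected u v
      rw [← hsup] at this
      rcases reach_sup_edge this with h | ⟨h1, h2⟩ | ⟨h1, h2⟩
      · exact h
      · exact (h1.trans hreach).trans h2
      · exact (h1.trans hreach.symm).trans h2
    have hcard : G'.edgeSet.ncard < n := by
      rw [← hn]
      apply Set.ncard_lt_ncard _ (Set.toFinite _)
      rw [hG', edgeSet_deleteEdges]
      exact Set.sdiff_singleton_ssubset.2 hadj
    obtain ⟨F, hFle, hFtree⟩ := ih _ hcard G' rfl hconn'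
    exact ⟨F, hFle.trans (deleteEdges_le _), hFtree⟩


section Main

variable {C : Type*} [Fintype V]

lemma forward {G F : SimpleGraph V} (color : Sym2 V → C)
    (hFG : F ≤ G) (hFtree : F.IsTree) (hinj : Set.InjOn color F.edgeSet)
    (R : Finset C) : omega (delR G color R) ≤ R.card + 1 := by
  classical
  have hmono : delR F color R ≤ delR G color R :=
    deleteEdges_mono hFG
  have h1 : omega (delR G color R) ≤ omega (delR F color R) := omega_le_of_le hmono
  set T : Finset (Sym2 V) :=
    (Set.toFinite (F.edgeSet ∩ {e | color e ∈ R})).toFinset with hT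
  have hTeq : delR F color R = F.deleteEdges ↑T := by
    ext u v
    simp only [delR, deleteEdges_adj, Set.mem_setOf_eq, hT, Set.Finite.coe_toFinset,
      Set.mem_inter_iff, mem_edgeSet]
    constructor
    · rintro ⟨ha, hb⟩; exact ⟨ha, fun hc => hb hc.2⟩
    · rintro ⟨ha, hb⟩; exact ⟨ha, fun hc => hb ⟨ha, hc⟩⟩
  have h2 : omega (F.deleteEdges ↑T) ≤ omega F + T.card :=
    omega_deleteEdges_finset F T
  have h3 : omega F = 1 := omega_eq_one hFtree.isConnected
  have h4 : T.card ≤ R.card := by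
    apply Finset.card_le_card_of_injOn color
    · intro e heT
      rw [hT, Finset.mem_coe, Set.Finite.mem_toFinset] at heT
      exact heT.2
    · apply hinj.mono
      intro e heT
      rw [hT, Finset.mem_coe, Set.Finite.mem_toFinset] at heT
      exact heT.1
  rw [hTeq] at h1
  omega

lemma backward (color : Sym2 V → C) :
    ∀ (n : ℕ) (G : SimpleGraph V), G.edgeSet.ncard = n → G.Connected →
      (∀ R : Finset C, omega (delR G color R) ≤ R.card + 1) →
      ∃ F, F ≤ G ∧ F.IsTree ∧ Set.InjOn color F.edgeSet := by
  classical
  intro n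
  induction n using Nat.strong_induction_on with
  | _ n ih =>
  intro G hn hG hcond
  by_cases hinj : Set.InjOn color G.edgeSet
  · obtain ⟨F, hle, htree⟩ := exists_tree _ G rfl hG
    exact ⟨F, hle, htree, hinj.mono (edgeSet_mono hle)⟩
  · rw [Set.InjOn] at hinj
    push_neg at hinj
    obtain ⟨e1, he1, e2, he2, hceq, hne⟩ := hinj
    have key : ∃ e ∈ G.edgeSet,
        ∀ R : Finset C, omega (delR (G.deleteEdges {e}) color R) ≤ R.card + 1 := by
      by_contra hc
      push_neg at hc
      obtain ⟨R1, hR1⟩ := hc e1 he1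
      obtain ⟨R2, hR2⟩ := hc e2 he2
      set H1 := delR (G.deleteEdges {e1}) color R1 with hH1def
      set H2 := delR (G.deleteEdges {e2}) color R2 with hH2def
      have hH1 : H1 = G.deleteEdges ({e1} ∪ {e | color e ∈ R1}) := by
        rw [hH1def, delR, deleteEdges_deleteEdges]
      have hH2 : H2 = G.deleteEdges ({e2} ∪ {e | color e ∈ R2}) := by
        rw [hH2def, delR, deleteEdges_deleteEdges]
      -- the shared color is in neither R1 nor R2
      have hc01 : color e1 ∉ R1 := by
        intro hmem
        have hunion : ({e1} ∪ {e | color e ∈ R1} : Set (Sym2 V)) = {e | color e ∈ R1} :=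
          Set.union_eq_self_of_subset_left (Set.singleton_subset_iff.2 hmem)
        have : H1 = delR G color R1 := by rw [hH1, hunion]; rfl
        have h5 := hcond R1
        rw [← this] at h5
        omega
      have hc02 : color e2 ∉ R2 := by
        intro hmem
        have hunion : ({e2} ∪ {e | color e ∈ R2} : Set (Sym2 V)) = {e | color e ∈ R2} :=
          Set.union_eq_self_of_subset_left (Set.singleton_subset_iff.2 hmem)
        have : H2 = delR G color R2 := by rw [hH2, hunion]; rfl
        have h5 := hcond R2
        rw [← this] at h5
        omega
      have hsub1 : delR G color (R1 ∩ R2) ≤ H1 ⊔ H2 := by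
        intro u v huv
        rw [delR, deleteEdges_adj, Set.mem_setOf_eq, Finset.mem_inter] at huv
        obtain ⟨hadj, hcol⟩ := huv
        rw [sup_adj, hH1, hH2, deleteEdges_adj, deleteEdges_adj]
        simp only [Set.mem_union, Set.mem_singleton_iff, Set.mem_setOf_eq]
        by_cases heq1 : s(u, v) = e1
        · right
          refine ⟨hadj, ?_⟩
          rintro (h | h)
          · exact hne (heq1 ▸ h)
          · rw [heq1, hceq] at h; exact hc02 h
        · by_cases hR1m : color s(u, v) ∈ R1
          · right
            refine ⟨hadj, ?_⟩
            rintro (h | h)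
            · rw [h, ← hceq] at hR1m
              exact hc01 hR1m
            · exact hcol ⟨hR1m, h⟩
          · left
            refine ⟨hadj, ?_⟩
            rintro (h | h)
            · exact heq1 h
            · exact hR1m h
      have hsub2 : delR G color (insert (color e1) (R1 ∪ R2)) ≤ H1 ⊓ H2 := by
        intro u v huv
        rw [delR, deleteEdges_adj, Set.mem_setOf_eq, Finset.mem_insert] at huv
        obtain ⟨hadj, hcol⟩ := huv
        push_neg at hcol
        obtain ⟨hnc0, hnun⟩ := hcol
        rw [Finset.mem_union] at hnun
        push_neg at hnun
        rw [inf_adj, hH1, hH2, deleteEdges_adj, deleteEdges_adj]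
        simp only [Set.mem_union, Set.mem_singleton_iff, Set.mem_setOf_eq]
        refine ⟨⟨hadj, ?_⟩, ⟨hadj, ?_⟩⟩
        · rintro (h | h)
          · exact hnc0 (by rw [h])
          · exact hnun.1 h
        · rintro (h | h)
          · exact hnc0 (by rw [h, ← hceq])
          · exact hnun.2 h
      have h1' := hcond (R1 ∩ R2)
      have h2' := hcond (insert (color e1) (R1 ∪ R2))
      have hm1 : omega (H1 ⊔ H2) ≤ omega (delR G color (R1 ∩ R2)) := omega_le_of_le hsub1
      have hm2 : omega (H1 ⊓ H2) ≤ omega (delR G color (insert (color e1) (R1 ∪ R2))) :=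
        omega_le_of_le hsub2
      have hsm := omega_supermodular H1 H2
      have hcards : (R1 ∩ R2).card + (R1 ∪ R2).card = R1.card + R2.card :=
        Finset.card_inter_add_card_union R1 R2
      have hins : (insert (color e1) (R1 ∪ R2)).card ≤ (R1 ∪ R2).card + 1 :=
        Finset.card_insert_le _ _
      omega
    obtain ⟨e, he, hkey⟩ := key
    set G' := G.deleteEdges {e} with hG'
    haveI : Nonempty V := hG.nonempty
    have hconn' : G'.Connected := by
      apply connected_of_omega_le_one
      have h0 := hkey ∅
      have : delR G' color ∅ = G' := by
        rw [delR]
        convert deleteEdges_empty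
        ext x
        simp
      rw [this] at h0
      simpa using h0
    have hcard : G'.edgeSet.ncard < n := by
      rw [← hn]
      apply Set.ncard_lt_ncard _ (Set.toFinite _)
      rw [hG', edgeSet_deleteEdges]
      exact Set.sdiff_singleton_ssubset.2 he
    obtain ⟨F, h1, h2, h3⟩ := ih _ hcard G' rfl hconn' hkey
    exact ⟨F, h1.trans (deleteEdges_le _), h2, h3⟩

end Main

end HetAux

theorem stmt9 {V C : Type*} [Fintype V] (G : SimpleGraph V) (color : Sym2 V → C)
    (hG : G.Connected) :
    (∃ F : SimpleGraph V, F ≤ G ∧ F.IsTree ∧ Set.InjOn color F.edgeSet) ↔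
      ∀ R : Finset C, omega (delR G color R) ≤ R.card + 1 := by
  constructor
  · rintro ⟨F, hFG, htree, hinj⟩ R
    exact HetAux.forward color hFG htree hinj R
  · intro h
    obtain ⟨F, h1, h2, h3⟩ := HetAux.backward color G.edgeSet.ncard G rfl hG h
    exact ⟨F, h1, h2, h3⟩
end
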